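/- arXiv:1611.04956 — 11 statements merged into one kernel-verified Lean document; each statement's English description precedes it below -/
import Mathlib

section
/- Let m,n be coprime positive integers and let π be an (m,n)-Dyck path. A cell (x,y) above π lies in Dinv(π) if and only if γ[(x,y)^→] > γ[(x,y)^⇓] and γ[(x,y)^↓] > γ[(x,y)^⇒]. -/
open scoped Classical

noncomputable section

/-- The rank of cell `(u,v)` in the `(m,n)`-diagram: `γ(u,v) = mn − un − (n+1−v)m`. -/
def rk (m n : ℕ) (u v : ℤ) : ℤ := (m : ℤ) * n - u * n - ((n : ℤ) + 1 - v) * m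

/-- The cells `(u,v)`, `1 ≤ u ≤ m`, `1 ≤ v ≤ n`, of the `(m,n)`-diagram. -/
def cells (m n : ℕ) : Finset (ℤ × ℤ) := Finset.Icc 1 (m : ℤ) ×ˢ Finset.Icc 1 (n : ℤ)

/-- `A` is the set of cells lying above some `(m,n)`-Dyck path: a northwest-closed set of
cells of the diagram, each lying strictly above the diagonal `y = (n/m)x`. -/
def IsDyckPath (m n : ℕ) (A : Finset (ℤ × ℤ)) : Prop :=
  A ⊆ cells m n ∧
  (∀ c ∈ A, 0 < (c.2 - 1) * (m : ℤ) - c.1 * n) ∧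
  (∀ c ∈ A, ∀ x y : ℤ, 1 ≤ x → x ≤ c.1 → c.2 ≤ y → y ≤ (n : ℤ) → (x, y) ∈ A)

/-- `arm(c)`: the number of cells above the path strictly east of `c` in its row. -/
def armOf (A : Finset (ℤ × ℤ)) (c : ℤ × ℤ) : ℕ :=
  (A.filter fun d => d.2 = c.2 ∧ c.1 < d.1).card

/-- `leg(c)`: the number of cells above the path strictly south of `c` in its column. -/
def legOf (A : Finset (ℤ × ℤ)) (c : ℤ × ℤ) : ℕ :=
  (A.filter fun d => d.1 = c.1 ∧ d.2 < c.2).card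

/-- `Dinv(π)`: cells above the path with `arm/(leg+1) < m/n < (arm+1)/leg`
(stated cross-multiplied, so that division by zero is `+∞`). -/
def dinvSet (m n : ℕ) (A : Finset (ℤ × ℤ)) : Finset (ℤ × ℤ) :=
  A.filter fun c =>
    (armOf A c : ℤ) * n < m * ((legOf A c : ℤ) + 1) ∧
    (m : ℤ) * (legOf A c : ℤ) < n * ((armOf A c : ℤ) + 1)

/-- `Skips(π)`: cells above the path not in `Dinv(π)`. -/
def skipsSet (m n : ℕ) (A : Finset (ℤ × ℤ)) : Finset (ℤ × ℤ) :=
  A.filter fun c => c ∉ dinvSet m n A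

/-- `Area(π)`: cells of the diagram below the path having positive rank. -/
def areaSet (m n : ℕ) (A : Finset (ℤ × ℤ)) : Finset (ℤ × ℤ) :=
  (cells m n).filter fun c => 0 < rk m n c.1 c.2 ∧ c ∉ A

def area (m n : ℕ) (A : Finset (ℤ × ℤ)) : ℕ := (areaSet m n A).card
def dinv (m n : ℕ) (A : Finset (ℤ × ℤ)) : ℕ := (dinvSet m n A).card
def skips (m n : ℕ) (A : Finset (ℤ × ℤ)) : ℕ := (skipsSet m n A).card

/-- The set of all `(m,n)`-Dyck paths (each identified with its set of cells above the path). -/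
def dyckPaths (m n : ℕ) : Finset (Finset (ℤ × ℤ)) :=
  (cells m n).powerset.filter (IsDyckPath m n)

/-- The letters of the `(m,n)`-word, encoded as the pairs `(k, ℓ)` with `k, ℓ ≥ 1` and
rank `mn − km − ℓn > 0`; the color of the letter `(k, ℓ)` is `ℓ`. -/
def letters (m n : ℕ) : Finset (ℤ × ℤ) :=
  (Finset.Icc 1 (n : ℤ) ×ˢ Finset.Icc 1 (m : ℤ)).filter fun p =>
    0 < (m : ℤ) * n - p.1 * m - p.2 * n

/-- The rank `mn − km − ℓn` of the letter `(k, ℓ)`. -/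
def letterRank (m n : ℕ) (p : ℤ × ℤ) : ℤ := (m : ℤ) * n - p.1 * m - p.2 * n

/-- An `(m,n)`-rank word, identified with its set of highlighted letters: if `(k,ℓ)` is
highlighted then so is `(i,j)` for all `1 ≤ i ≤ k`, `1 ≤ j ≤ ℓ`. -/
def IsRankWord (m n : ℕ) (H : Finset (ℤ × ℤ)) : Prop :=
  H ⊆ letters m n ∧
  ∀ p ∈ H, ∀ i j : ℤ, 1 ≤ i → i ≤ p.1 → 1 ≤ j → j ≤ p.2 → (i, j) ∈ H

/-- The set of all `(m,n)`-rank words. -/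
def rankWords (m n : ℕ) : Finset (Finset (ℤ × ℤ)) :=
  (letters m n).powerset.filter (IsRankWord m n)

/-- The Dyck path `Π(w)` associated to a rank word: the cells above the path are exactly the
cells whose rank is a highlighted letter; the letter `(k,ℓ)` corresponds to the unique cell
`(ℓ, n+1−k)` of the diagram having the same rank. -/
def toPath (n : ℕ) (H : Finset (ℤ × ℤ)) : Finset (ℤ × ℤ) :=
  H.image fun p => (p.2, (n : ℤ) + 1 - p.1)

/-- `area(w)`: the number of unhighlighted letters of the rank word. -/
def wordArea (m n : ℕ) (H : Finset (ℤ × ℤ)) : ℕ :=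
  ((letters m n).filter fun p => p ∉ H).card

/-- `S(w)`: ordered pairs of letters `(a_k, b_ℓ)` with `a_k` highlighted, `b_ℓ` not
highlighted, and `a < b`. -/
def wordS (m n : ℕ) (H : Finset (ℤ × ℤ)) : Finset ((ℤ × ℤ) × (ℤ × ℤ)) :=
  (letters m n ×ˢ letters m n).filter fun pq =>
    pq.1 ∈ H ∧ pq.2 ∉ H ∧ letterRank m n pq.1 < letterRank m n pq.2

/-- The relation on `S(w)`: `(a_k,b_ℓ) ∼ (c_r,d_t)` iff (`k = r` and `b ≡ d (mod n)`) or
(`ℓ = t` and `a ≡ c (mod n)`).  (The color of a letter is its second component.) -/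
def wordRel (m n : ℕ) (x y : (ℤ × ℤ) × (ℤ × ℤ)) : Prop :=
  (x.1.2 = y.1.2 ∧ letterRank m n x.2 ≡ letterRank m n y.2 [ZMOD (n : ℤ)]) ∨
  (x.2.2 = y.2.2 ∧ letterRank m n x.1 ≡ letterRank m n y.1 [ZMOD (n : ℤ)])

/-- `skips(w)`: the number of equivalence classes of `S(w)` under the equivalence relation
generated by `wordRel`. -/
def wordSkips (m n : ℕ) (H : Finset (ℤ × ℤ)) : ℕ :=
  Nat.card (Quot fun x y : {p // p ∈ wordS m n H} => wordRel m n x.1 y.1)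

/-- `dinv(w) = (m−1)(n−1)/2 − area(w) − skips(w)`. -/
def wordDinv (m n : ℕ) (H : Finset (ℤ × ℤ)) : ℤ :=
  ((m : ℤ) - 1) * ((n : ℤ) - 1) / 2 - wordArea m n H - wordSkips m n H

/-- The generating function `W_{m,n}(b,q,t) = Σ_w b^{skips(w)} q^{dinv(w)} t^{area(w)}`. -/
def Wgen (m n : ℕ) (b q t : ℚ) : ℚ :=
  ∑ H ∈ rankWords m n, b ^ wordSkips m n H * q ^ wordDinv m n H * t ^ wordArea m n H

/-- The rational `q,t`-Catalan polynomial `C_{m,n}(q,t) = Σ_π q^{dinv(π)} t^{area(π)}`. -/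
def Cqt (m n : ℕ) (q t : ℚ) : ℚ :=
  ∑ A ∈ dyckPaths m n, q ^ dinv m n A * t ^ area m n A

/-- The two-variable Schur polynomial of a two-row partition `(l1, l2)`:
`s_{(l1,l2)}(q,t) = Σ_{j=0}^{l1−l2} q^{l2+j} t^{l1−j}`. -/
def schur2 (l1 l2 : ℕ) (q t : ℚ) : ℚ :=
  ∑ j ∈ Finset.range (l1 - l2 + 1), q ^ (l2 + j) * t ^ (l1 - j)


/-- **Fast dinv.**  Let `m,n` be coprime positive integers, `π` an `(m,n)`-Dyck path and
`c = (x,y)` a cell above the path.  With `r = (x,y)^→` (the easternmost cell above the path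
in row `y`) and `d = (x,y)^↓` (the southernmost cell above the path in column `x`), so that
`(x,y)^⇒ = (r.1 + 1, y)` and `(x,y)^⇓ = (x, d.2 - 1)`, the cell `c` lies in `Dinv(π)` iff
`γ[(x,y)^→] > γ[(x,y)^⇓]` and `γ[(x,y)^↓] > γ[(x,y)^⇒]`. -/
theorem stmt0 (m n : ℕ) (hm : 0 < m) (hn : 0 < n) (hmn : Nat.Coprime m n)
    (A : Finset (ℤ × ℤ)) (hA : IsDyckPath m n A) (c : ℤ × ℤ) (hc : c ∈ A)
    (r : ℤ × ℤ) (hr : r ∈ A) (hr2 : r.2 = c.2) (hrmax : ∀ e ∈ A, e.2 = c.2 → e.1 ≤ r.1)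
    (d : ℤ × ℤ) (hd : d ∈ A) (hd1 : d.1 = c.1) (hdmin : ∀ e ∈ A, e.1 = c.1 → d.2 ≤ e.2) :
    c ∈ dinvSet m n A ↔
      rk m n r.1 c.2 > rk m n c.1 (d.2 - 1) ∧ rk m n c.1 d.2 > rk m n (r.1 + 1) c.2 := by
  have hcC := hA.1 hc
  have hdC := hA.1 hd
  have hrC := hA.1 hr
  simp only [cells, Finset.mem_product, Finset.mem_Icc] at hcC hdC hrC
  have hcr : c.1 ≤ r.1 := hrmax c hc rfl
  have hdc : d.2 ≤ c.2 := hdmin c hc rfl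
  have harm : (armOf A c : ℤ) = r.1 - c.1 := by
    have hset : A.filter (fun e => e.2 = c.2 ∧ c.1 < e.1) =
        (Finset.Ioc c.1 r.1).image (fun u => (u, c.2)) := by
      ext ⟨u, v⟩
      simp only [Finset.mem_filter, Finset.mem_image, Finset.mem_Ioc, Prod.mk.injEq]
      constructor
      · rintro ⟨hmem, rfl, hlt⟩
        exact ⟨u, ⟨hlt, hrmax _ hmem rfl⟩, rfl, rfl⟩
      · rintro ⟨w, ⟨hlt, hle⟩, rfl, rfl⟩
        refine ⟨hA.2.2 r hr w c.2 ?_ hle (hr2.le) hcC.2.2, rfl, hlt⟩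
        linarith [hcC.1.1]
    have hinj : Function.Injective (fun u : ℤ => (u, c.2)) := by
      intro a b h; simpa using h
    rw [armOf, hset, Finset.card_image_of_injective _ hinj, Int.card_Ioc,
      Int.toNat_of_nonneg (by linarith)]
  have hleg : (legOf A c : ℤ) = c.2 - d.2 := by
    have hset : A.filter (fun e => e.1 = c.1 ∧ e.2 < c.2) =
        (Finset.Ico d.2 c.2).image (fun v => (c.1, v)) := by
      ext ⟨u, v⟩
      simp only [Finset.mem_filter, Finset.mem_image, Finset.mem_Ico, Prod.mk.injEq]
      constructor
      · rintro ⟨hmem, rfl, hlt⟩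
        exact ⟨v, ⟨hdmin _ hmem rfl, hlt⟩, rfl, rfl⟩
      · rintro ⟨w, ⟨hge, hlt⟩, rfl, rfl⟩
        refine ⟨hA.2.2 d hd c.1 w ?_ (le_of_eq hd1.symm) hge ?_, rfl, hlt⟩
        · exact hcC.1.1
        · linarith [hcC.2.2]
    have hinj : Function.Injective (fun v : ℤ => (c.1, v)) := by
      intro a b h; simpa using h
    rw [legOf, hset, Finset.card_image_of_injective _ hinj, Int.card_Ico,
      Int.toNat_of_nonneg (by linarith)]
  simp only [dinvSet, Finset.mem_filter, hc, true_and, harm, hleg, rk, gt_iff_lt]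
  constructor
  · rintro ⟨h1, h2⟩
    exact ⟨by linarith, by linarith⟩
  · rintro ⟨h1, h2⟩
    exact ⟨by linarith, by linarith⟩

end
end

section
/- Let m,n be coprime positive integers, π an (m,n)-Dyck path, and (x,y) a cell above π. Suppose a is a rank in the same row as (x,y) and b is a rank in the same column as (x,y). If b < a with a below the path and b above the path, or if a < b with b below the path and a above the path, then (x,y) ∉ Dinv(π). -/
open scoped Classical

noncomputable section

private lemma arm_upper {n : ℕ} {A : Finset (ℤ × ℤ)}
    (hcl : ∀ c ∈ A, ∀ x y : ℤ, 1 ≤ x → x ≤ c.1 → c.2 ≤ y → y ≤ (n : ℤ) → (x, y) ∈ A)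
    (c p : ℤ × ℤ) (hp1 : 1 ≤ p.1) (hpn : p.2 = c.2) (hc2 : c.2 ≤ (n : ℤ))
    (hpA : p ∉ A) :
    armOf A c ≤ (p.1 - c.1 - 1).toNat := by
  have hsub : A.filter (fun d => d.2 = c.2 ∧ c.1 < d.1)
      ⊆ (Finset.Icc (c.1 + 1) (p.1 - 1)).image (fun x => (x, c.2)) := by
    intro d hd
    simp only [Finset.mem_filter] at hd
    obtain ⟨hdA, hd2, hd1⟩ := hd
    have hdp : d.1 < p.1 := by
      by_contra hle
      push_neg at hle
      have : (p.1, p.2) ∈ A :=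
        hcl d hdA p.1 p.2 hp1 hle (by rw [hpn, hd2]) (by rw [hpn]; exact hc2)
      exact hpA (by simpa using this)
    simp only [Finset.mem_image, Finset.mem_Icc]
    exact ⟨d.1, ⟨by omega, by omega⟩, by rw [← hd2]⟩
  calc armOf A c ≤ ((Finset.Icc (c.1 + 1) (p.1 - 1)).image (fun x => (x, c.2))).card :=
        Finset.card_le_card hsub
    _ ≤ (Finset.Icc (c.1 + 1) (p.1 - 1)).card := Finset.card_image_le
    _ = (p.1 - c.1 - 1).toNat := by rw [Int.card_Icc]; congr 1; ring

private lemma arm_lower {n : ℕ} {A : Finset (ℤ × ℤ)}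
    (hcl : ∀ c ∈ A, ∀ x y : ℤ, 1 ≤ x → x ≤ c.1 → c.2 ≤ y → y ≤ (n : ℤ) → (x, y) ∈ A)
    (c p : ℤ × ℤ) (hpA : p ∈ A) (hpn : p.2 = c.2) (hc1 : 1 ≤ c.1) (hc2 : c.2 ≤ (n : ℤ)) :
    (p.1 - c.1).toNat ≤ armOf A c := by
  have hsub : (Finset.Icc (c.1 + 1) p.1).image (fun x => (x, c.2))
      ⊆ A.filter (fun d => d.2 = c.2 ∧ c.1 < d.1) := by
    intro d hd
    simp only [Finset.mem_image, Finset.mem_Icc] at hd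
    obtain ⟨x, ⟨hx1, hx2⟩, rfl⟩ := hd
    refine Finset.mem_filter.mpr ⟨?_, rfl, by omega⟩
    exact hcl p hpA x c.2 (by omega) hx2 (le_of_eq hpn) hc2
  have hinj : Function.Injective (fun x : ℤ => (x, c.2)) := fun a b h => by
    simpa using congrArg Prod.fst h
  have hcard := Finset.card_le_card hsub
  rw [Finset.card_image_of_injective _ hinj, Int.card_Icc] at hcard
  unfold armOf
  omega

private lemma leg_lower {n : ℕ} {A : Finset (ℤ × ℤ)}
    (hcl : ∀ c ∈ A, ∀ x y : ℤ, 1 ≤ x → x ≤ c.1 → c.2 ≤ y → y ≤ (n : ℤ) → (x, y) ∈ A)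
    (c q : ℤ × ℤ) (hqA : q ∈ A) (hqn : q.1 = c.1) (hc1 : 1 ≤ c.1) (hc2 : c.2 ≤ (n : ℤ)) :
    (c.2 - q.2).toNat ≤ legOf A c := by
  have hsub : (Finset.Icc q.2 (c.2 - 1)).image (fun y => (c.1, y))
      ⊆ A.filter (fun d => d.1 = c.1 ∧ d.2 < c.2) := by
    intro d hd
    simp only [Finset.mem_image, Finset.mem_Icc] at hd
    obtain ⟨y, ⟨hy1, hy2⟩, rfl⟩ := hd
    refine Finset.mem_filter.mpr ⟨?_, rfl, by omega⟩
    exact hcl q hqA c.1 y hc1 (le_of_eq hqn.symm) hy1 (by omega)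
  have hinj : Function.Injective (fun y : ℤ => (c.1, y)) := fun a b h => by
    simpa using congrArg Prod.snd h
  have hcard := Finset.card_le_card hsub
  rw [Finset.card_image_of_injective _ hinj, Int.card_Icc] at hcard
  unfold legOf
  omega

private lemma leg_upper {n : ℕ} {A : Finset (ℤ × ℤ)}
    (hcl : ∀ c ∈ A, ∀ x y : ℤ, 1 ≤ x → x ≤ c.1 → c.2 ≤ y → y ≤ (n : ℤ) → (x, y) ∈ A)
    (c q : ℤ × ℤ) (hq1 : 1 ≤ q.1) (hqn : q.1 = c.1) (hq2 : q.2 ≤ (n : ℤ))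
    (hqA : q ∉ A) :
    legOf A c ≤ (c.2 - q.2 - 1).toNat := by
  have hsub : A.filter (fun d => d.1 = c.1 ∧ d.2 < c.2)
      ⊆ (Finset.Icc (q.2 + 1) (c.2 - 1)).image (fun y => (c.1, y)) := by
    intro d hd
    simp only [Finset.mem_filter] at hd
    obtain ⟨hdA, hd1, hd2⟩ := hd
    have hdq : q.2 < d.2 := by
      by_contra hle
      push_neg at hle
      have : (q.1, q.2) ∈ A :=
        hcl d hdA q.1 q.2 hq1 (by rw [hqn, hd1]) hle hq2
      exact hqA (by simpa using this)
    simp only [Finset.mem_image, Finset.mem_Icc]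
    exact ⟨d.2, ⟨by omega, by omega⟩, by rw [← hd1]⟩
  calc legOf A c ≤ ((Finset.Icc (q.2 + 1) (c.2 - 1)).image (fun y => (c.1, y))).card :=
        Finset.card_le_card hsub
    _ ≤ (Finset.Icc (q.2 + 1) (c.2 - 1)).card := Finset.card_image_le
    _ = (c.2 - q.2 - 1).toNat := by rw [Int.card_Icc]; congr 1; ring

/-- Let `π` be an `(m,n)`-Dyck path and `c = (x,y)` a cell above the path.  If `p` is a cell
in the same row as `c` and `q` a cell in the same column as `c` (with ranks `a = γ(p)` and
`b = γ(q)`), and either `b < a` with `p` below the path and `q` above the path, or `a < b`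
with `q` below the path and `p` above the path, then `c ∉ Dinv(π)`. -/
theorem stmt1 (m n : ℕ) (hm : 0 < m) (hn : 0 < n) (hmn : Nat.Coprime m n)
    (A : Finset (ℤ × ℤ)) (hA : IsDyckPath m n A) (c : ℤ × ℤ) (hc : c ∈ A)
    (p q : ℤ × ℤ) (hp : p ∈ cells m n) (hq : q ∈ cells m n)
    (hprow : p.2 = c.2) (hqcol : q.1 = c.1)
    (h : (rk m n q.1 q.2 < rk m n p.1 p.2 ∧ p ∉ A ∧ q ∈ A) ∨
         (rk m n p.1 p.2 < rk m n q.1 q.2 ∧ q ∉ A ∧ p ∈ A)) :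
    c ∉ dinvSet m n A := by
  obtain ⟨hsub, -, hcl⟩ := hA
  have hcc := hsub hc
  simp only [cells, Finset.mem_product, Finset.mem_Icc] at hcc hp hq
  obtain ⟨⟨hc1, hc1m⟩, hc2, hc2n⟩ := hcc
  obtain ⟨⟨hp1, hp1m⟩, hp2, hp2n⟩ := hp
  obtain ⟨⟨hq1, hq1m⟩, hq2, hq2n⟩ := hq
  intro hdinv
  simp only [dinvSet, Finset.mem_filter] at hdinv
  obtain ⟨-, h1, h2⟩ := hdinv
  have hn0 : (0 : ℤ) ≤ (n : ℤ) := by positivity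
  have hm0 : (0 : ℤ) ≤ (m : ℤ) := by positivity
  rcases h with ⟨hrk, hpA, hqA⟩ | ⟨hrk, hqA, hpA⟩
  · -- case 1 : rk q < rk p, p below, q above
    have hpc1 : c.1 < p.1 := by
      by_contra hle
      push_neg at hle
      have : (p.1, p.2) ∈ A := hcl c hc p.1 p.2 hp1 hle (le_of_eq hprow.symm) hp2n
      exact hpA (by simpa using this)
    rw [hqcol] at hrk
    rw [hprow] at hrk
    simp only [rk] at hrk
    have key : (p.1 - c.1) * (n : ℤ) < (c.2 - q.2) * (m : ℤ) := by linarith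
    have harm := arm_upper hcl c p hp1 hprow hc2n hpA
    have hleg := leg_lower hcl c q hqA hqcol hc1 hc2n
    have harm' : (armOf A c : ℤ) ≤ p.1 - c.1 - 1 := by omega
    have hleg' : c.2 - q.2 ≤ (legOf A c : ℤ) := by omega
    have h3 : (n : ℤ) * ((armOf A c : ℤ) + 1) ≤ (n : ℤ) * (p.1 - c.1) :=
      mul_le_mul_of_nonneg_left (by omega) hn0
    have h4 : (m : ℤ) * (c.2 - q.2) ≤ (m : ℤ) * (legOf A c : ℤ) :=
      mul_le_mul_of_nonneg_left hleg' hm0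
    linarith
  · -- case 2 : rk p < rk q, q below, p above
    have hqc2 : q.2 < c.2 := by
      by_contra hle
      push_neg at hle
      have : (q.1, q.2) ∈ A := hcl c hc q.1 q.2 hq1 (le_of_eq hqcol) hle hq2n
      exact hqA (by simpa using this)
    rw [hqcol] at hrk
    rw [hprow] at hrk
    simp only [rk] at hrk
    have key : (c.2 - q.2) * (m : ℤ) < (p.1 - c.1) * (n : ℤ) := by linarith
    have harm := arm_lower hcl c p hpA hprow hc1 hc2n
    have hleg := leg_upper hcl c q hq1 hqcol hq2n hqA
    have harm' : p.1 - c.1 ≤ (armOf A c : ℤ) := by omega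
    have hleg' : (legOf A c : ℤ) ≤ c.2 - q.2 - 1 := by omega
    have h3 : (m : ℤ) * ((legOf A c : ℤ) + 1) ≤ (m : ℤ) * (c.2 - q.2) :=
      mul_le_mul_of_nonneg_left (by omega) hm0
    have h4 : (n : ℤ) * (p.1 - c.1) ≤ (n : ℤ) * (armOf A c : ℤ) :=
      mul_le_mul_of_nonneg_left harm' hn0
    linarith

end
end

section
/- Let m,n be coprime positive integers and π an (m,n)-Dyck path. If the cell (m−1,v) (i.e., a cell in column m−1) is above the path π, then (m−1,v) ∈ Dinv(π). -/
open scoped Classical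

noncomputable section

/-- If the cell `(m−1, v)` is above the `(m,n)`-Dyck path `π`, then `(m−1,v) ∈ Dinv(π)`. -/
theorem stmt2 (m n : ℕ) (hm : 0 < m) (hn : 0 < n) (hmn : Nat.Coprime m n)
    (A : Finset (ℤ × ℤ)) (hA : IsDyckPath m n A) (v : ℤ)
    (hv : ((m : ℤ) - 1, v) ∈ A) :
    ((m : ℤ) - 1, v) ∈ dinvSet m n A := by
  obtain ⟨hsub, hdiag, hclose⟩ := hA
  have hc := hsub hv
  simp only [cells, Finset.mem_product, Finset.mem_Icc] at hc
  obtain ⟨⟨hu1, hu2⟩, hv1, hv2⟩ := hc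
  have hmz : (0 : ℤ) < m := by exact_mod_cast hm
  have hnz : (0 : ℤ) < n := by exact_mod_cast hn
  -- arm is zero
  have harm : armOf A ((m:ℤ)-1, v) = 0 := by
    rw [armOf, Finset.card_eq_zero, Finset.filter_eq_empty_iff]
    rintro ⟨x, y⟩ hd ⟨hy, hx⟩
    have hcx := hsub hd
    simp only [cells, Finset.mem_product, Finset.mem_Icc] at hcx
    have hdg := hdiag _ hd
    simp only at hdg hy hx
    have hxm : x = (m : ℤ) := by omega
    subst hxm hy
    nlinarith
  -- leg bound : m * leg < n
  have hleg : (m:ℤ) * legOf A ((m:ℤ)-1, v) < n := by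
    set b : ℤ := ((m:ℤ)-1)*n + m with hb
    set q : ℤ := b / m with hq
    have hmod := Int.mul_ediv_add_emod b m
    have hr1 : 0 ≤ b % m := Int.emod_nonneg b (by positivity)
    have hr2 : b % m < m := Int.emod_lt_of_pos b hmz
    have hcard : legOf A ((m:ℤ)-1, v) ≤ (Finset.Ioc q ((n:ℤ)-1)).card := by
      apply Finset.card_le_card_of_injOn Prod.snd
      · rintro ⟨x, y⟩ hd
        replace hd : (x, y) ∈ A.filter (fun d => d.1 = (m:ℤ)-1 ∧ d.2 < v) := hd
        show y ∈ (Finset.Ioc q ((n:ℤ)-1) : Set ℤ)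
        rw [Finset.mem_coe]
        simp only [Finset.mem_filter] at hd
        obtain ⟨hdA, hx, hy⟩ := hd
        have hdg := hdiag _ hdA
        simp only at hdg
        rw [hx] at hdg
        rw [Finset.mem_Ioc]
        constructor
        · -- y > q since m*y > b ≥ m*q
          have h1 : b < (m:ℤ) * y := by nlinarith
          by_contra hcon
          push_neg at hcon
          have : (m:ℤ) * y ≤ m * q := by
            exact mul_le_mul_of_nonneg_left hcon (le_of_lt hmz)
          nlinarith
        · omega
      · rintro ⟨x, y⟩ hx ⟨x', y'⟩ hx' h
        simp only [Finset.mem_coe, Finset.mem_filter] at hx hx'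
        simp only at h
        have : x = x' := by
          have h1 := hx.2.1
          have h2 := hx'.2.1
          rw [h1, h2]
        simp [Prod.ext_iff, this, h]
    rw [Int.card_Ioc] at hcard
    have hcast : (legOf A ((m:ℤ)-1, v) : ℤ) ≤ (((n:ℤ) - 1 - q).toNat : ℤ) := by
      exact_mod_cast hcard
    rcases le_or_gt ((n:ℤ) - 1 - q) 0 with hle | hlt
    · have h0 : (((n:ℤ) - 1 - q).toNat : ℤ) = 0 := by
        simp [Int.toNat_of_nonpos hle]
      rw [h0] at hcast
      have : (legOf A ((m:ℤ)-1, v) : ℤ) = 0 := le_antisymm hcast (by exact_mod_cast Nat.zero_le _)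
      rw [this]; simpa using hnz
    · have h0 : (((n:ℤ) - 1 - q).toNat : ℤ) = (n:ℤ) - 1 - q := by
        rw [Int.toNat_of_nonneg (le_of_lt hlt)]
      rw [h0] at hcast
      have h3 : (m:ℤ) * legOf A ((m:ℤ)-1, v) ≤ m * ((n:ℤ) - 1 - q) :=
        mul_le_mul_of_nonneg_left hcast (le_of_lt hmz)
      nlinarith
  rw [dinvSet, Finset.mem_filter]
  refine ⟨hv, ?_, ?_⟩
  · rw [harm]; push_cast
    have hl0 : (0:ℤ) ≤ (legOf A ((m:ℤ)-1, v) : ℤ) := by exact_mod_cast Nat.zero_le _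
    nlinarith
  · rw [harm]; push_cast
    simpa using hleg

end
end

section
/- Let m,n be coprime positive integers. The map sending an (m,n)-rank word w to the (m,n)-Dyck path Π(w) whose cells above the path are exactly the cells of the (m,n)-diagram whose rank is a highlighted letter of w is a well-defined bijection between the set of (m,n)-rank words and the set of (m,n)-Dyck paths. -/
open scoped Classical

noncomputable section

/-- The map sending an `(m,n)`-rank word `w` to the `(m,n)`-Dyck path `Π(w)` whose cells
above the path are exactly the cells of the diagram whose rank is a highlighted letter of
`w` is a well-defined bijection between `(m,n)`-rank words and `(m,n)`-Dyck paths. -/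
theorem stmt5 (m n : ℕ) (hm : 0 < m) (hn : 0 < n) (hmn : Nat.Coprime m n) :
    Set.BijOn (toPath n) {H : Finset (ℤ × ℤ) | IsRankWord m n H}
      {A : Finset (ℤ × ℤ) | IsDyckPath m n A} := by
  have hinj : Function.Injective (fun p : ℤ × ℤ => (p.2, (n : ℤ) + 1 - p.1)) := by
    intro a b h
    simp only [Prod.mk.injEq] at h
    obtain ⟨h1, h2⟩ := h
    exact Prod.ext (by omega) h1
  refine ⟨?_, ?_, ?_⟩
  · intro H hH
    obtain ⟨hsub, hclos⟩ := hH
    refine ⟨?_, ?_, ?_⟩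
    · intro c hc
      simp only [toPath, Finset.mem_image] at hc
      obtain ⟨p, hp, rfl⟩ := hc
      have := hsub hp
      simp only [letters, Finset.mem_filter, Finset.mem_product, Finset.mem_Icc] at this
      simp only [cells, Finset.mem_product, Finset.mem_Icc]
      omega
    · intro c hc
      simp only [toPath, Finset.mem_image] at hc
      obtain ⟨p, hp, rfl⟩ := hc
      have := hsub hp
      simp only [letters, Finset.mem_filter, Finset.mem_product, Finset.mem_Icc] at this
      dsimp only
      linarith [this.2]
    · intro c hc x y hx1 hx2 hy1 hy2
      simp only [toPath, Finset.mem_image] at hc ⊢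
      obtain ⟨p, hp, rfl⟩ := hc
      refine ⟨((n : ℤ) + 1 - y, x), hclos p hp _ _ (by omega) (by omega) hx1 hx2, ?_⟩
      simp
  · intro H1 h1 H2 h2 heq
    exact Finset.image_injective hinj heq
  · intro A hA
    obtain ⟨hsub, hdiag, hclos⟩ := hA
    refine ⟨A.image (fun c => ((n : ℤ) + 1 - c.2, c.1)), ⟨?_, ?_⟩, ?_⟩
    · intro p hp
      simp only [Finset.mem_image] at hp
      obtain ⟨c, hc, rfl⟩ := hp
      have h1 := hsub hc
      have h2 := hdiag c hc
      simp only [cells, Finset.mem_product, Finset.mem_Icc] at h1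
      simp only [letters, Finset.mem_filter, Finset.mem_product, Finset.mem_Icc]
      constructor
      · omega
      · nlinarith
    · intro p hp i j hi1 hi2 hj1 hj2
      simp only [Finset.mem_image] at hp ⊢
      obtain ⟨c, hc, rfl⟩ := hp
      simp only at hi2 hj2
      refine ⟨(j, (n : ℤ) + 1 - i), hclos c hc _ _ hj1 hj2 (by omega) (by omega), ?_⟩
      simp
    · simp only [toPath, Finset.image_image]
      have : ((fun p : ℤ × ℤ => (p.2, (n : ℤ) + 1 - p.1)) ∘
          fun c : ℤ × ℤ => ((n : ℤ) + 1 - c.2, c.1)) = id := by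
        funext c; simp
      rw [this, Finset.image_id]

end
end

section
/- Let m,n be coprime positive integers and w an (m,n)-rank word. Then area(w) = area(Π(w)): the number of unhighlighted letters of w equals the number of cells with positive rank lying below the Dyck path Π(w). -/
open scoped Classical

noncomputable section

/-- For an `(m,n)`-rank word `w`, `area(w) = area(Π(w))`: the number of unhighlighted
letters of `w` equals the number of cells with positive rank below the Dyck path `Π(w)`. -/
theorem stmt6 (m n : ℕ) (hm : 0 < m) (hn : 0 < n) (hmn : Nat.Coprime m n)
    (H : Finset (ℤ × ℤ)) (hw : IsRankWord m n H) :
    wordArea m n H = area m n (toPath n H) := by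
  classical
  set φ : ℤ × ℤ → ℤ × ℤ := fun p => (p.2, (n : ℤ) + 1 - p.1) with hφ
  have hinj : Function.Injective φ := by
    intro a b h
    simp only [hφ, Prod.mk.injEq] at h
    exact Prod.ext (by linarith [h.2]) h.1
  have hset : areaSet m n (toPath n H) =
      ((letters m n).filter fun p => p ∉ H).image φ := by
    ext c
    constructor
    · intro hc
      rw [areaSet, Finset.mem_filter] at hc
      simp only [areaSet, Finset.mem_filter, cells, Finset.mem_product,
        Finset.mem_Icc, rk] at hc
      obtain ⟨⟨⟨h1u, h2u⟩, h1v, h2v⟩, hpos, hnot⟩ := hc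
      refine Finset.mem_image.mpr ⟨((n : ℤ) + 1 - c.2, c.1), ?_, ?_⟩
      · simp only [Finset.mem_filter, letters, Finset.mem_product, Finset.mem_Icc]
        refine ⟨⟨⟨⟨by linarith, by linarith⟩, h1u, h2u⟩, by linarith⟩, ?_⟩
        intro hmem
        apply hnot
        simp only [toPath, Finset.mem_image]
        exact ⟨_, hmem, by simp [hφ, Prod.ext_iff]⟩
      · simp [hφ, Prod.ext_iff]
    · intro hc
      obtain ⟨p, hp, rfl⟩ := Finset.mem_image.mp hc
      simp only [Finset.mem_filter, letters, Finset.mem_product, Finset.mem_Icc] at hp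
      obtain ⟨⟨⟨⟨h1k, h2k⟩, h1l, h2l⟩, hpos⟩, hpH⟩ := hp
      rw [areaSet, Finset.mem_filter]
      simp only [areaSet, Finset.mem_filter, cells, Finset.mem_product,
        Finset.mem_Icc, rk, hφ]
      refine ⟨⟨⟨h1l, h2l⟩, by linarith, by linarith⟩, by linarith, ?_⟩
      intro hmem
      simp only [toPath, Finset.mem_image] at hmem
      obtain ⟨q, hq, hqe⟩ := hmem
      exact hpH (hinj hqe ▸ hq)
  rw [wordArea, area, hset, Finset.card_image_of_injective _ hinj]

end
end

section
/- Let m,n be coprime positive integers and w an (m,n)-rank word. Partition S(w) into S_< = {(a_k,b_ℓ) ∈ S(w) : k < ℓ} and S_> = {(a_k,b_ℓ) ∈ S(w) : k > ℓ}. If (a_k,b_ℓ) ∼ (c_r,d_t) in S(w), then (a_k,b_ℓ) and (c_r,d_t) are both in S_< or both in S_>. -/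
open scoped Classical

noncomputable section

lemma mem_letters' (m n : ℕ) (p : ℤ × ℤ) (h : p ∈ letters m n) :
    1 ≤ p.1 ∧ p.1 ≤ n ∧ 1 ≤ p.2 ∧ p.2 ≤ m := by
  simp only [letters, Finset.mem_filter, Finset.mem_product, Finset.mem_Icc] at h
  tauto

lemma pairStruct' (m n : ℕ) (hm : 0 < m) (hn : 0 < n) (H : Finset (ℤ × ℤ))
    (hw : IsRankWord m n H) (p q : ℤ × ℤ) (hp : p ∈ H) (hq : q ∉ H)
    (hq1 : 1 ≤ q.1) (hq2 : 1 ≤ q.2)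
    (hr : letterRank m n p < letterRank m n q) :
    (q.1 < p.1 ∧ p.2 < q.2) ∨ (p.1 < q.1 ∧ q.2 < p.2) := by
  have h1 : ¬ (q.1 ≤ p.1 ∧ q.2 ≤ p.2) := by
    rintro ⟨h1, h2⟩
    exact hq (by simpa using hw.2 p hp q.1 q.2 hq1 h1 hq2 h2)
  have h2 : ¬ (p.1 ≤ q.1 ∧ p.2 ≤ q.2) := by
    rintro ⟨h1, h2⟩
    unfold letterRank at hr
    have hm' : (0:ℤ) < m := by exact_mod_cast hm
    have hn' : (0:ℤ) < n := by exact_mod_cast hn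
    nlinarith
  omega

lemma firstEq' (m n : ℕ) (hn : 0 < n) (hmn : Nat.Coprime m n) (p q : ℤ × ℤ)
    (hp1 : 1 ≤ p.1) (hp : p.1 ≤ n) (hq1 : 1 ≤ q.1) (hq : q.1 ≤ n)
    (h : letterRank m n p ≡ letterRank m n q [ZMOD (n : ℤ)]) : p.1 = q.1 := by
  have hd : (n : ℤ) ∣ (letterRank m n q - letterRank m n p) := Int.ModEq.dvd h
  have heq : letterRank m n q - letterRank m n p
      = (p.1 - q.1) * m + (p.2 - q.2) * n := by
    unfold letterRank; ring
  rw [heq] at hd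
  have hd2 : (n : ℤ) ∣ (p.1 - q.1) * m := by
    have h2 : (n : ℤ) ∣ (p.2 - q.2) * n := dvd_mul_left _ _
    simpa using dvd_sub hd h2
  have hcop : IsCoprime (n : ℤ) (m : ℤ) := by
    rw [Int.isCoprime_iff_gcd_eq_one]
    simpa [Int.gcd, Nat.coprime_comm] using hmn.symm
  have hd3 : (n : ℤ) ∣ (p.1 - q.1) := hcop.dvd_of_dvd_mul_right hd2
  have : p.1 - q.1 = 0 := Int.eq_zero_of_abs_lt_dvd hd3 (by
    rw [abs_lt]; omega)
  omega


/-- If `(a_k,b_ℓ) ∼ (c_r,d_t)` in `S(w)`, then both pairs lie in `S_<` (first color less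
than second color) or both lie in `S_>` (first color greater than second color). -/
theorem stmt7 (m n : ℕ) (hm : 0 < m) (hn : 0 < n) (hmn : Nat.Coprime m n)
    (H : Finset (ℤ × ℤ)) (hw : IsRankWord m n H)
    (x y : (ℤ × ℤ) × (ℤ × ℤ)) (hx : x ∈ wordS m n H) (hy : y ∈ wordS m n H)
    (hxy : wordRel m n x y) :
    (x.1.2 < x.2.2 ∧ y.1.2 < y.2.2) ∨ (x.2.2 < x.1.2 ∧ y.2.2 < y.1.2) := by
  simp only [wordS, Finset.mem_filter, Finset.mem_product] at hx hy
  obtain ⟨⟨hxl1, hxl2⟩, hx1H, hx2H, hxr⟩ := hx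
  obtain ⟨⟨hyl1, hyl2⟩, hy1H, hy2H, hyr⟩ := hy
  obtain ⟨a1, a2, a3, a4⟩ := mem_letters' m n _ hxl1
  obtain ⟨b1, b2, b3, b4⟩ := mem_letters' m n _ hxl2
  obtain ⟨c1, c2, c3, c4⟩ := mem_letters' m n _ hyl1
  obtain ⟨d1, d2, d3, d4⟩ := mem_letters' m n _ hyl2
  have Px := pairStruct' m n hm hn H hw x.1 x.2 hx1H hx2H b1 b3 hxr
  have Py := pairStruct' m n hm hn H hw y.1 y.2 hy1H hy2H d1 d3 hyr
  rcases hxy with ⟨hcol, hcong⟩ | ⟨hcol, hcong⟩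
  · have heq : x.2.1 = y.2.1 := firstEq' m n hn hmn x.2 y.2 b1 b2 d1 d2 hcong
    rcases Px with ⟨h1, h2⟩ | ⟨h1, h2⟩ <;> rcases Py with ⟨h3, h4⟩ | ⟨h3, h4⟩
    · exact Or.inl ⟨h2, h4⟩
    · exfalso
      have hmem : (y.2.1, y.2.2) ∈ H := hw.2 x.1 hx1H y.2.1 y.2.2 d1 (by omega) d3 (by omega)
      exact hy2H (by simpa using hmem)
    · exfalso
      have hmem : (x.2.1, x.2.2) ∈ H := hw.2 y.1 hy1H x.2.1 x.2.2 b1 (by omega) b3 (by omega)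
      exact hx2H (by simpa using hmem)
    · exact Or.inr ⟨h2, h4⟩
  · have heq : x.1.1 = y.1.1 := firstEq' m n hn hmn x.1 y.1 a1 a2 c1 c2 hcong
    rcases Px with ⟨h1, h2⟩ | ⟨h1, h2⟩ <;> rcases Py with ⟨h3, h4⟩ | ⟨h3, h4⟩
    · exact Or.inl ⟨h2, h4⟩
    · exfalso
      have hmem : (x.2.1, x.2.2) ∈ H := hw.2 y.1 hy1H x.2.1 x.2.2 b1 (by omega) b3 (by omega)
      exact hx2H (by simpa using hmem)
    · exfalso
      have hmem : (y.2.1, y.2.2) ∈ H := hw.2 x.1 hx1H y.2.1 y.2.2 d1 (by omega) d3 (by omega)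
      exact hy2H (by simpa using hmem)
    · exact Or.inr ⟨h2, h4⟩

end
end

section
/- Let m,n be coprime positive integers. For every cell (u,v) of the (m,n)-diagram with 1 ≤ u ≤ m−1 and 2 ≤ v ≤ n, one has γ(m−u, n−v+2) = −γ(u,v); moreover no rank equals 0, and consequently the number of cells (u,v) with 1 ≤ u ≤ m, 1 ≤ v ≤ n and γ(u,v) > 0 equals (m−1)(n−1)/2. -/
open scoped Classical

noncomputable section

/-- In the `(m,n)`-diagram: for `1 ≤ u ≤ m−1` and `2 ≤ v ≤ n` one has
`γ(m−u, n−v+2) = −γ(u,v)`; no rank is `0`; and the number of cells with positive rank is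
`(m−1)(n−1)/2`. -/
theorem stmt9 (m n : ℕ) (hm : 0 < m) (hn : 0 < n) (hmn : Nat.Coprime m n) :
    (∀ u v : ℤ, 1 ≤ u → u ≤ (m : ℤ) - 1 → 2 ≤ v → v ≤ (n : ℤ) →
        rk m n ((m : ℤ) - u) ((n : ℤ) - v + 2) = - rk m n u v) ∧
    (∀ c ∈ cells m n, rk m n c.1 c.2 ≠ 0) ∧
    ((cells m n).filter fun c => 0 < rk m n c.1 c.2).card = (m - 1) * (n - 1) / 2 := by
  have hm' : (0:ℤ) < m := by exact_mod_cast hm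
  have hn' : (0:ℤ) < n := by exact_mod_cast hn
  have hrev : ∀ u v : ℤ, rk m n ((m:ℤ)-u) ((n:ℤ)-v+2) = - rk m n u v := by
    intro u v; simp only [rk]; ring
  have hz : ∀ c ∈ cells m n, rk m n c.1 c.2 ≠ 0 := by
    rintro ⟨u, v⟩ hc h0
    simp only [cells, Finset.mem_product, Finset.mem_Icc] at hc
    obtain ⟨⟨hu1, hum⟩, hv1, hvn⟩ := hc
    simp only [rk] at h0
    have hd : (m:ℤ) ∣ ((m:ℤ) - u) := by
      have hco : IsCoprime (m:ℤ) (n:ℤ) := by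
        exact Nat.isCoprime_iff_coprime.mpr hmn
      have h1 : (m:ℤ) ∣ (n:ℤ) * ((m:ℤ) - u) := ⟨(n:ℤ)+1-v, by linear_combination h0⟩
      exact hco.dvd_of_dvd_mul_left h1
    obtain ⟨k, hk⟩ := hd
    have hk1 : k < 1 := by nlinarith
    have hk2 : 0 < k + 1 := by nlinarith
    have hk0 : k = 0 := by omega
    have hum' : u = (m:ℤ) := by rw [hk0] at hk; linarith
    rw [hum'] at h0
    nlinarith
  refine ⟨fun u v _ _ _ _ => hrev u v, hz, ?_⟩
  set I : Finset (ℤ × ℤ) := Finset.Icc (1:ℤ) ((m:ℤ)-1) ×ˢ Finset.Icc (2:ℤ) (n:ℤ) with hI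
  have hIc : ∀ c ∈ I, c ∈ cells m n := by
    rintro ⟨u, v⟩ hc
    simp only [hI, cells, Finset.mem_product, Finset.mem_Icc] at *
    omega
  have hP : (cells m n).filter (fun c => 0 < rk m n c.1 c.2)
      = I.filter (fun c => 0 < rk m n c.1 c.2) := by
    ext ⟨u, v⟩
    simp only [Finset.mem_filter, hI, cells, Finset.mem_product, Finset.mem_Icc]
    constructor
    · rintro ⟨⟨⟨hu1, hum⟩, hv1, hvn⟩, hpos⟩
      simp only [rk] at hpos
      refine ⟨⟨⟨hu1, ?_⟩, ?_, hvn⟩, hpos⟩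
      · nlinarith
      · nlinarith
    · rintro ⟨⟨⟨hu1, hum⟩, hv1, hvn⟩, hpos⟩
      exact ⟨⟨⟨hu1, by linarith⟩, by linarith, hvn⟩, hpos⟩
  have hcard : (I.filter (fun c => 0 < rk m n c.1 c.2)).card
      = (I.filter (fun c => rk m n c.1 c.2 < 0)).card := by
    apply Finset.card_bij (fun c _ => ((m:ℤ) - c.1, (n:ℤ) - c.2 + 2))
    · rintro ⟨u, v⟩ hc
      simp only [Finset.mem_filter, hI, Finset.mem_product, Finset.mem_Icc] at *
      obtain ⟨⟨⟨hu1, hum⟩, hv1, hvn⟩, hpos⟩ := hc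
      refine ⟨⟨⟨by omega, by omega⟩, by omega, by omega⟩, ?_⟩
      rw [hrev u v]; omega
    · rintro ⟨u, v⟩ _ ⟨u', v'⟩ _ h
      simp only [Prod.mk.injEq] at h ⊢
      omega
    · rintro ⟨u, v⟩ hc
      simp only [Finset.mem_filter, hI, Finset.mem_product, Finset.mem_Icc] at hc
      obtain ⟨⟨⟨hu1, hum⟩, hv1, hvn⟩, hneg⟩ := hc
      refine ⟨((m:ℤ) - u, (n:ℤ) - v + 2), ?_, by simp only [Prod.mk.injEq]; omega⟩
      simp only [Finset.mem_filter, hI, Finset.mem_product, Finset.mem_Icc]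
      refine ⟨⟨⟨by omega, by omega⟩, by omega, by omega⟩, ?_⟩
      rw [hrev u v]; omega
  have hsplit : (I.filter (fun c => 0 < rk m n c.1 c.2)).card
      + (I.filter (fun c => rk m n c.1 c.2 < 0)).card = I.card := by
    have key := Finset.card_filter_add_card_filter_not
      (s := I) (p := fun c : ℤ × ℤ => 0 < rk m n c.1 c.2)
    have hEq : I.filter (fun c => ¬ 0 < rk m n c.1 c.2)
        = I.filter (fun c => rk m n c.1 c.2 < 0) := by
      apply Finset.filter_congr
      intro c hc
      have := hz c (hIc c hc)
      simp only [not_lt, eq_iff_iff]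
      constructor <;> intro h <;> omega
    rw [hEq] at key
    exact key
  have hIcard : I.card = (m - 1) * (n - 1) := by
    simp only [hI, Finset.card_product, Int.card_Icc]
    have h1 : ((m:ℤ) - 1 + 1 - 1).toNat = m - 1 := by omega
    have h2 : ((n:ℤ) + 1 - 2).toNat = n - 1 := by omega
    rw [h1, h2]
  rw [hP]
  omega

end
end

section
/- Let m,n be coprime positive integers and π an (m,n)-Dyck path. Then area(π) + dinv(π) + skips(π) = (m−1)(n−1)/2. -/
open scoped Classical

noncomputable section

lemma rk_eq (m n : ℕ) (u v : ℤ) : rk m n u v = (v - 1) * m - u * n := by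
  unfold rk; ring

lemma no_eq_aux (m n : ℕ) (hmn : Nat.Coprime m n)
    (u v : ℤ) (hu1 : 1 ≤ u) (hu2 : u ≤ (m : ℤ) - 1) (hveq : u * n = v * m) : False := by
  have hco : IsCoprime (m : ℤ) (n : ℤ) := by
    rw [Int.isCoprime_iff_gcd_eq_one]; exact_mod_cast hmn
  have hdvd : (m : ℤ) ∣ u := hco.dvd_of_dvd_mul_right ⟨v, by rw [hveq]; ring⟩
  have := Int.le_of_dvd (by omega) hdvd
  omega

lemma countP (m n : ℕ) (hm : 0 < m) (hn : 0 < n) (hmn : Nat.Coprime m n) :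
    2 * (((cells m n).filter fun c => 0 < rk m n c.1 c.2).card) = (m - 1) * (n - 1) := by
  set Q : Finset (ℤ × ℤ) :=
    Finset.Icc (1 : ℤ) ((m : ℤ) - 1) ×ˢ Finset.Icc (1 : ℤ) ((n : ℤ) - 1) with hQ
  have hmemQ : ∀ c : ℤ × ℤ, c ∈ Q ↔
      1 ≤ c.1 ∧ c.1 ≤ (m : ℤ) - 1 ∧ 1 ≤ c.2 ∧ c.2 ≤ (n : ℤ) - 1 := by
    intro c
    simp [hQ, Finset.mem_product, Finset.mem_Icc, and_assoc]
  have h1 : ((cells m n).filter fun c => 0 < rk m n c.1 c.2).card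
      = (Q.filter fun c => c.1 * (n : ℤ) < c.2 * (m : ℤ)).card := by
    apply Finset.card_bij (fun c _ => (c.1, c.2 - 1))
    · intro a ha
      simp only [Finset.mem_filter, cells, Finset.mem_product, Finset.mem_Icc] at ha
      rw [rk_eq] at ha
      obtain ⟨⟨⟨ha1, ha2⟩, ha3, ha4⟩, ha5⟩ := ha
      simp only [Finset.mem_filter, hmemQ]
      have hn1 : (1 : ℤ) ≤ a.2 - 1 := by nlinarith
      have hm1 : a.1 ≤ (m : ℤ) - 1 := by nlinarith
      exact ⟨⟨ha1, hm1, hn1, by omega⟩, by linarith⟩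
    · intro a ha b hb hab
      simp only [Prod.ext_iff] at hab ⊢
      exact ⟨hab.1, by omega⟩
    · intro b hb
      simp only [Finset.mem_filter, hmemQ] at hb
      obtain ⟨⟨hb1, hb2, hb3, hb4⟩, hb5⟩ := hb
      refine ⟨(b.1, b.2 + 1), ?_, by simp⟩
      simp only [Finset.mem_filter, cells, Finset.mem_product, Finset.mem_Icc, rk_eq]
      exact ⟨⟨⟨hb1, by omega⟩, by omega, by omega⟩, by linarith⟩
  have h2 : (Q.filter fun c => c.1 * (n : ℤ) < c.2 * (m : ℤ)).card
      = (Q.filter fun c => c.2 * (m : ℤ) < c.1 * (n : ℤ)).card := by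
    apply Finset.card_bij (fun c _ => ((m : ℤ) - c.1, (n : ℤ) - c.2))
    · intro a ha
      simp only [Finset.mem_filter, hmemQ] at ha ⊢
      obtain ⟨⟨ha1, ha2, ha3, ha4⟩, ha5⟩ := ha
      exact ⟨⟨by omega, by omega, by omega, by omega⟩, by nlinarith⟩
    · intro a ha b hb hab
      simp only [Prod.ext_iff] at hab ⊢
      omega
    · intro b hb
      simp only [Finset.mem_filter, hmemQ] at hb
      obtain ⟨⟨hb1, hb2, hb3, hb4⟩, hb5⟩ := hb
      refine ⟨((m : ℤ) - b.1, (n : ℤ) - b.2), ?_, by simp⟩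
      simp only [Finset.mem_filter, hmemQ]
      exact ⟨⟨by omega, by omega, by omega, by omega⟩, by nlinarith⟩
  have hfe : (Q.filter fun c => ¬ c.1 * (n : ℤ) < c.2 * (m : ℤ))
      = Q.filter fun c => c.2 * (m : ℤ) < c.1 * (n : ℤ) := by
    ext c
    simp only [Finset.mem_filter, hmemQ, not_lt]
    constructor
    · rintro ⟨hc, h⟩
      refine ⟨hc, lt_of_le_of_ne h fun heq => ?_⟩
      exact no_eq_aux m n hmn c.1 c.2 hc.1 hc.2.1 heq.symm
    · rintro ⟨hc, h⟩
      exact ⟨hc, le_of_lt h⟩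
  have h3 : (Q.filter fun c => c.1 * (n : ℤ) < c.2 * (m : ℤ)).card
      + (Q.filter fun c => c.2 * (m : ℤ) < c.1 * (n : ℤ)).card = Q.card := by
    rw [← hfe]
    exact Finset.card_filter_add_card_filter_not _
  have h4 : Q.card = (m - 1) * (n - 1) := by
    rw [hQ, Finset.card_product, Int.card_Icc, Int.card_Icc]
    have e1 : ((m : ℤ) - 1 + 1 - 1).toNat = m - 1 := by omega
    have e2 : ((n : ℤ) - 1 + 1 - 1).toNat = n - 1 := by omega
    rw [e1, e2]
  omega

/-- For an `(m,n)`-Dyck path `π`, `area(π) + dinv(π) + skips(π) = (m−1)(n−1)/2`. -/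
theorem stmt10 (m n : ℕ) (hm : 0 < m) (hn : 0 < n) (hmn : Nat.Coprime m n)
    (A : Finset (ℤ × ℤ)) (hA : IsDyckPath m n A) :
    area m n A + dinv m n A + skips m n A = (m - 1) * (n - 1) / 2 := by
  set P := (cells m n).filter fun c => 0 < rk m n c.1 c.2 with hP
  have hAP : A ⊆ P := by
    intro c hc
    simp only [hP, Finset.mem_filter]
    refine ⟨hA.1 hc, ?_⟩
    rw [rk_eq]
    exact hA.2.1 c hc
  have hdsub : dinvSet m n A ⊆ A := Finset.filter_subset _ _
  have hskip : skipsSet m n A = A \ dinvSet m n A := by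
    ext c
    simp only [skipsSet, Finset.mem_filter, Finset.mem_sdiff]
  have hds : skips m n A = A.card - dinv m n A := by
    rw [skips, hskip, Finset.card_sdiff_of_subset hdsub]; rfl
  have hdle : dinv m n A ≤ A.card := Finset.card_le_card hdsub
  have harea : areaSet m n A = P \ A := by
    ext c
    simp only [areaSet, hP, Finset.mem_filter, Finset.mem_sdiff]
    tauto
  have har : area m n A = P.card - A.card := by
    rw [area, harea, Finset.card_sdiff_of_subset hAP]
  have hale : A.card ≤ P.card := Finset.card_le_card hAP
  have hcount := countP m n hm hn hmn
  rw [← hP] at hcount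
  omega

end
end

section
/- Let n > 1 be an integer not divisible by 3. Then C_{3,n}(q,t) = Σ_{i=0}^{⌊n/3⌋} s_{(n−1−2i, i)}(q,t), where s_{(λ1,λ2)}(q,t) = Σ_{j=0}^{λ1−λ2} q^{λ2+j} t^{λ1−j} is the two-variable Schur polynomial of the two-row partition (λ1,λ2). -/
open scoped Classical

noncomputable section

namespace Stmt13Aux

/-- The set of cells above the `(3,n)`-Dyck path with `a` cells in column 1 and `b` in column 2. -/
def P (n a b : ℕ) : Finset (ℤ × ℤ) :=
  ({1} : Finset ℤ) ×ˢ Finset.Icc ((n:ℤ)+1-a) n ∪ ({2} : Finset ℤ) ×ˢ Finset.Icc ((n:ℤ)+1-b) n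

lemma mem_P {n a b : ℕ} {c : ℤ × ℤ} :
    c ∈ P n a b ↔ (c.1 = 1 ∧ (n:ℤ)+1-a ≤ c.2 ∧ c.2 ≤ n) ∨
      (c.1 = 2 ∧ (n:ℤ)+1-b ≤ c.2 ∧ c.2 ≤ n) := by
  simp only [P, Finset.mem_union, Finset.mem_product, Finset.mem_singleton, Finset.mem_Icc,
    and_assoc]

lemma upclosed_eq_Icc {n : ℕ} (T : Finset ℤ) (hsub : T ⊆ Finset.Icc 1 (n:ℤ))
    (hup : ∀ v ∈ T, ∀ y : ℤ, v ≤ y → y ≤ n → y ∈ T) :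
    T = Finset.Icc ((n:ℤ)+1-T.card) n := by
  rcases T.eq_empty_or_nonempty with h | h
  · rw [h]; simp only [Finset.card_empty]
    symm; rw [Finset.Icc_eq_empty_iff]; push_cast; omega
  · have hmin := T.min'_mem h
    have hm : 1 ≤ T.min' h ∧ T.min' h ≤ n := by
      have := hsub hmin; simpa [Finset.mem_Icc] using this
    have h1 : T = Finset.Icc (T.min' h) n := by
      apply Finset.Subset.antisymm
      · intro x hx
        have := hsub hx
        simp only [Finset.mem_Icc] at this ⊢
        exact ⟨T.min'_le x hx, this.2⟩
      · intro y hy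
        simp only [Finset.mem_Icc] at hy
        exact hup _ hmin y hy.1 hy.2
    have hcard : (T.card : ℤ) = (n:ℤ) + 1 - T.min' h := by
      have h2 := congrArg Finset.card h1
      rw [Int.card_Icc] at h2
      omega
    calc T = Finset.Icc (T.min' h) (n:ℤ) := h1
      _ = Finset.Icc ((n:ℤ)+1-T.card) n := by congr 1; omega

lemma mem_cells {m n : ℕ} {c : ℤ × ℤ} :
    c ∈ cells m n ↔ 1 ≤ c.1 ∧ c.1 ≤ m ∧ 1 ≤ c.2 ∧ c.2 ≤ n := by
  simp only [cells, Finset.mem_product, Finset.mem_Icc, and_assoc]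

lemma isDyck_P {n a b : ℕ} (hn : 1 < n) (h3 : ¬ (3 ∣ n)) (hba : b ≤ a)
    (ha : a ≤ n - n/3 - 1) (hb : b ≤ n/3) :
    IsDyckPath 3 n (P n a b) := by
  have hk : n % 3 = 1 ∨ n % 3 = 2 := by omega
  refine ⟨?_, ?_, ?_⟩
  · intro c hc
    rcases mem_P.mp hc with ⟨h1, h2, h3'⟩ | ⟨h1, h2, h3'⟩ <;>
      · rw [mem_cells]; push_cast; omega
  · intro c hc
    rcases mem_P.mp hc with ⟨h1, h2, h3'⟩ | ⟨h1, h2, h3'⟩ <;> rw [h1] <;> push_cast <;> omega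
  · intro c hc x y hx1 hxc hcy hyn
    rcases mem_P.mp hc with ⟨h1, h2, h3'⟩ | ⟨h1, h2, h3'⟩
    · have hx : x = 1 := by omega
      subst hx; exact mem_P.mpr (Or.inl ⟨rfl, by omega, hyn⟩)
    · rcases (by omega : x = 1 ∨ x = 2) with hx | hx <;> subst hx
      · exact mem_P.mpr (Or.inl ⟨rfl, by omega, hyn⟩)
      · exact mem_P.mpr (Or.inr ⟨rfl, by omega, hyn⟩)

lemma dyck_eq_P {n : ℕ} (hn : 1 < n) (h3 : ¬ (3 ∣ n)) {A : Finset (ℤ × ℤ)}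
    (hA : IsDyckPath 3 n A) :
    ∃ a b : ℕ, b ≤ a ∧ a ≤ n - n/3 - 1 ∧ b ≤ n/3 ∧ A = P n a b := by
  have hk : n % 3 = 1 ∨ n % 3 = 2 := by omega
  obtain ⟨hsub, hdiag, hclose⟩ := hA
  have hbound : ∀ c ∈ A, 1 ≤ c.1 ∧ c.1 ≤ 3 ∧ 1 ≤ c.2 ∧ c.2 ≤ (n:ℤ) := by
    intro c hc; have := hsub hc; rw [mem_cells] at this; push_cast at this; exact this
  set T1 : Finset ℤ := (Finset.Icc (1:ℤ) n).filter (fun v => ((1:ℤ), v) ∈ A) with hT1def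
  set T2 : Finset ℤ := (Finset.Icc (1:ℤ) n).filter (fun v => ((2:ℤ), v) ∈ A) with hT2def
  have hmemT1 : ∀ v : ℤ, v ∈ T1 ↔ ((1:ℤ), v) ∈ A := by
    intro v
    rw [hT1def, Finset.mem_filter, Finset.mem_Icc]
    constructor
    · exact fun h => h.2
    · intro h; exact ⟨⟨(hbound _ h).2.2.1, (hbound _ h).2.2.2⟩, h⟩
  have hmemT2 : ∀ v : ℤ, v ∈ T2 ↔ ((2:ℤ), v) ∈ A := by
    intro v
    rw [hT2def, Finset.mem_filter, Finset.mem_Icc]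
    constructor
    · exact fun h => h.2
    · intro h; exact ⟨⟨(hbound _ h).2.2.1, (hbound _ h).2.2.2⟩, h⟩
  have hT3 : ∀ v : ℤ, ((3:ℤ), v) ∉ A := by
    intro v hv
    have h1 := hdiag _ hv
    have h2 := (hbound _ hv).2.2.2
    push_cast at h1
    omega
  set a0 := T1.card with ha0
  set b0 := T2.card with hb0
  have hIcc1 : T1 = Finset.Icc ((n:ℤ)+1-a0) n := by
    rw [ha0]
    refine upclosed_eq_Icc T1 (Finset.filter_subset _ _) ?_
    intro v hv y hvy hyn
    rw [hmemT1] at hv ⊢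
    exact hclose _ hv 1 y le_rfl le_rfl hvy hyn
  have hIcc2 : T2 = Finset.Icc ((n:ℤ)+1-b0) n := by
    rw [hb0]
    refine upclosed_eq_Icc T2 (Finset.filter_subset _ _) ?_
    intro v hv y hvy hyn
    rw [hmemT2] at hv ⊢
    exact hclose _ hv 2 y (by omega) le_rfl hvy hyn
  have hcard1 : a0 ≤ n := by
    rw [ha0]
    calc T1.card ≤ (Finset.Icc (1:ℤ) n).card := Finset.card_le_card (Finset.filter_subset _ _)
      _ = n := by rw [Int.card_Icc]; omega
  have hcard2 : b0 ≤ n := by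
    rw [hb0]
    calc T2.card ≤ (Finset.Icc (1:ℤ) n).card := Finset.card_le_card (Finset.filter_subset _ _)
      _ = n := by rw [Int.card_Icc]; omega
  refine ⟨a0, b0, ?_, ?_, ?_, ?_⟩
  · -- b ≤ a
    rcases Nat.eq_zero_or_pos b0 with h0 | h0
    · omega
    · have hmem2 : ((2:ℤ), (n:ℤ)+1-b0) ∈ A := by
        rw [← hmemT2, hIcc2, Finset.mem_Icc]; constructor <;> push_cast <;> omega
      have hmem1 : ((1:ℤ), (n:ℤ)+1-b0) ∈ A :=
        hclose _ hmem2 1 _ le_rfl (by norm_num) le_rfl (by push_cast; omega)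
      rw [← hmemT1, hIcc1, Finset.mem_Icc] at hmem1
      omega
  · -- a ≤ n - n/3 - 1
    rcases Nat.eq_zero_or_pos a0 with h0 | h0
    · omega
    · have hmem1 : ((1:ℤ), (n:ℤ)+1-a0) ∈ A := by
        rw [← hmemT1, hIcc1, Finset.mem_Icc]; constructor <;> push_cast <;> omega
      have := hdiag _ hmem1
      push_cast at this
      omega
  · -- b ≤ n/3
    rcases Nat.eq_zero_or_pos b0 with h0 | h0
    · omega
    · have hmem2 : ((2:ℤ), (n:ℤ)+1-b0) ∈ A := by
        rw [← hmemT2, hIcc2, Finset.mem_Icc]; constructor <;> push_cast <;> omega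
      have := hdiag _ hmem2
      push_cast at this
      omega
  · -- A = P n a0 b0
    ext c
    obtain ⟨u, v⟩ := c
    rw [mem_P]
    constructor
    · intro hc
      have hb := hbound _ hc
      simp only at hb
      rcases (by omega : u = 1 ∨ u = 2 ∨ u = 3) with hu | hu | hu <;> subst hu
      · left
        have : v ∈ T1 := (hmemT1 v).mpr hc
        rw [hIcc1, Finset.mem_Icc] at this
        exact ⟨rfl, this.1, this.2⟩
      · right
        have : v ∈ T2 := (hmemT2 v).mpr hc
        rw [hIcc2, Finset.mem_Icc] at this
        exact ⟨rfl, this.1, this.2⟩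
      · exact absurd hc (hT3 v)
    · rintro (⟨hu, h1, h2⟩ | ⟨hu, h1, h2⟩) <;> simp only at hu <;> subst hu
      · rw [← hmemT1 v] at *
        rw [hIcc1, Finset.mem_Icc]
        exact ⟨h1, h2⟩
      · rw [← hmemT2 v] at *
        rw [hIcc2, Finset.mem_Icc]
        exact ⟨h1, h2⟩

lemma col1_card {n a b : ℕ} (ha : a ≤ n) : ((P n a b).filter (fun c => c.1 = 1)).card = a := by
  have h : (P n a b).filter (fun c => c.1 = 1) =
      ({1} : Finset ℤ) ×ˢ Finset.Icc ((n:ℤ)+1-a) n := by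
    ext c
    rw [Finset.mem_filter, mem_P, Finset.mem_product, Finset.mem_singleton, Finset.mem_Icc]
    constructor
    · rintro ⟨⟨h1, h2, h3'⟩ | ⟨h1, h2, h3'⟩, hc⟩ <;> exact ⟨hc, by omega, h3'⟩
    · rintro ⟨h1, h2, h3'⟩
      exact ⟨Or.inl ⟨h1, h2, h3'⟩, h1⟩
  rw [h, Finset.card_product, Finset.card_singleton, Int.card_Icc]
  omega

lemma col2_card {n a b : ℕ} (hb : b ≤ n) : ((P n a b).filter (fun c => c.1 = 2)).card = b := by
  have h : (P n a b).filter (fun c => c.1 = 2) =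
      ({2} : Finset ℤ) ×ˢ Finset.Icc ((n:ℤ)+1-b) n := by
    ext c
    rw [Finset.mem_filter, mem_P, Finset.mem_product, Finset.mem_singleton, Finset.mem_Icc]
    constructor
    · rintro ⟨⟨h1, h2, h3'⟩ | ⟨h1, h2, h3'⟩, hc⟩ <;> exact ⟨hc, by omega, h3'⟩
    · rintro ⟨h1, h2, h3'⟩
      exact ⟨Or.inr ⟨h1, h2, h3'⟩, h1⟩
  rw [h, Finset.card_product, Finset.card_singleton, Int.card_Icc]
  omega

lemma area_P {n a b : ℕ} (hn : 1 < n) (h3 : ¬ (3 ∣ n)) (hba : b ≤ a)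
    (ha : a ≤ n - n/3 - 1) (hb : b ≤ n/3) :
    area 3 n (P n a b) = n - 1 - a - b := by
  have hk : n % 3 = 1 ∨ n % 3 = 2 := by omega
  have hset : areaSet 3 n (P n a b) =
      ({1} : Finset ℤ) ×ˢ Finset.Icc (((n/3 : ℕ) : ℤ) + 2) ((n:ℤ) - a) ∪
      ({2} : Finset ℤ) ×ˢ Finset.Icc ((n:ℤ) - ((n/3 : ℕ) : ℤ) + 1) ((n:ℤ) - b) := by
    ext ⟨u, v⟩
    simp only [areaSet, rk, Finset.mem_filter, mem_cells, mem_P, Finset.mem_union,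
      Finset.mem_product, Finset.mem_singleton, Finset.mem_Icc]
    constructor
    · rintro ⟨⟨hu1, hu3, hv1, hvn⟩, hrk, hnP⟩
      rcases (by omega : u = 1 ∨ u = 2 ∨ u = 3) with hu | hu | hu <;> subst hu <;>
        push_cast at hrk
      · exact Or.inl ⟨rfl, by omega, by omega⟩
      · exact Or.inr ⟨rfl, by omega, by omega⟩
      · exfalso; omega
    · rintro (⟨hu, h1, h2⟩ | ⟨hu, h1, h2⟩) <;> subst hu <;>
        refine ⟨⟨by norm_num, by norm_num, by omega, by omega⟩, by push_cast; omega,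
          by push_cast; simp only [false_and, true_and, false_or, or_false, and_true]; omega⟩
  have hdisj : Disjoint
      (({1} : Finset ℤ) ×ˢ Finset.Icc (((n/3 : ℕ) : ℤ) + 2) ((n:ℤ) - a))
      (({2} : Finset ℤ) ×ˢ Finset.Icc ((n:ℤ) - ((n/3 : ℕ) : ℤ) + 1) ((n:ℤ) - b)) := by
    rw [Finset.disjoint_left]
    rintro ⟨u, v⟩ h1 h2
    rw [Finset.mem_product, Finset.mem_singleton] at h1 h2
    omega
  rw [area, hset, Finset.card_union_of_disjoint hdisj, Finset.card_product,
    Finset.card_product, Finset.card_singleton, Finset.card_singleton,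
    Int.card_Icc, Int.card_Icc]
  omega

lemma armOf_P_one {n a b : ℕ} {v : ℤ} (h1 : (n:ℤ)+1-b ≤ v) (h2 : v ≤ n) :
    armOf (P n a b) (1, v) = 1 := by
  have h : (P n a b).filter (fun d => d.2 = ((1:ℤ), v).2 ∧ ((1:ℤ), v).1 < d.1)
      = {((2:ℤ), v)} := by
    ext ⟨x, y⟩
    rw [Finset.mem_filter, mem_P, Finset.mem_singleton, Prod.mk.injEq]
    simp only
    constructor
    · rintro ⟨⟨hx, hy1, hy2⟩ | ⟨hx, hy1, hy2⟩, hyv, hx1⟩ <;> omega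
    · rintro ⟨hx, hy⟩
      subst hx; subst hy
      exact ⟨Or.inr ⟨rfl, h1, h2⟩, rfl, by norm_num⟩
  rw [armOf, h, Finset.card_singleton]

lemma armOf_P_zero1 {n a b : ℕ} {v : ℤ} (h1 : v < (n:ℤ)+1-b) :
    armOf (P n a b) (1, v) = 0 := by
  have h : (P n a b).filter (fun d => d.2 = ((1:ℤ), v).2 ∧ ((1:ℤ), v).1 < d.1) = ∅ := by
    rw [Finset.eq_empty_iff_forall_notMem]
    rintro ⟨x, y⟩ hmem
    rw [Finset.mem_filter, mem_P] at hmem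
    simp only at hmem
    omega
  rw [armOf, h, Finset.card_empty]

lemma armOf_P_zero2 {n a b : ℕ} {v : ℤ} :
    armOf (P n a b) (2, v) = 0 := by
  have h : (P n a b).filter (fun d => d.2 = ((2:ℤ), v).2 ∧ ((2:ℤ), v).1 < d.1) = ∅ := by
    rw [Finset.eq_empty_iff_forall_notMem]
    rintro ⟨x, y⟩ hmem
    rw [Finset.mem_filter, mem_P] at hmem
    simp only at hmem
    omega
  rw [armOf, h, Finset.card_empty]

lemma legOf_P_one {n a b : ℕ} {v : ℤ} (hv : v ≤ (n:ℤ)) :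
    legOf (P n a b) (1, v) = (v - ((n:ℤ)+1) + a).toNat := by
  have h : (P n a b).filter (fun d => d.1 = ((1:ℤ), v).1 ∧ d.2 < ((1:ℤ), v).2)
      = ({1} : Finset ℤ) ×ˢ Finset.Icc ((n:ℤ)+1-a) (v-1) := by
    ext ⟨x, y⟩
    rw [Finset.mem_filter, mem_P, Finset.mem_product, Finset.mem_singleton, Finset.mem_Icc]
    simp only
    constructor
    · rintro ⟨⟨hx, hy1, hy2⟩ | ⟨hx, hy1, hy2⟩, hx1, hyv⟩ <;> omega
    · rintro ⟨hx, hy1, hy2⟩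
      exact ⟨Or.inl ⟨hx, hy1, by omega⟩, hx, by omega⟩
  rw [legOf, h, Finset.card_product, Finset.card_singleton, Int.card_Icc]
  omega

lemma legOf_P_two {n a b : ℕ} {v : ℤ} (hv : v ≤ (n:ℤ)) :
    legOf (P n a b) (2, v) = (v - ((n:ℤ)+1) + b).toNat := by
  have h : (P n a b).filter (fun d => d.1 = ((2:ℤ), v).1 ∧ d.2 < ((2:ℤ), v).2)
      = ({2} : Finset ℤ) ×ˢ Finset.Icc ((n:ℤ)+1-b) (v-1) := by
    ext ⟨x, y⟩
    rw [Finset.mem_filter, mem_P, Finset.mem_product, Finset.mem_singleton, Finset.mem_Icc]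
    simp only
    constructor
    · rintro ⟨⟨hx, hy1, hy2⟩ | ⟨hx, hy1, hy2⟩, hx1, hyv⟩ <;> omega
    · rintro ⟨hx, hy1, hy2⟩
      exact ⟨Or.inr ⟨hx, hy1, by omega⟩, hx, by omega⟩
  rw [legOf, h, Finset.card_product, Finset.card_singleton, Int.card_Icc]
  omega

lemma dinv_P {n a b : ℕ} (hn : 1 < n) (h3 : ¬ (3 ∣ n)) (hba : b ≤ a)
    (ha : a ≤ n - n/3 - 1) (hb : b ≤ n/3) :
    dinv 3 n (P n a b) = b + min (a - b) (n/3 + 1) + (a - max (a - b) (n/3)) := by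
  have hk : n % 3 = 1 ∨ n % 3 = 2 := by omega
  have hset : dinvSet 3 n (P n a b) =
      ({2} : Finset ℤ) ×ˢ Finset.Icc ((n:ℤ)+1-b) n ∪
      ({1} : Finset ℤ) ×ˢ Finset.Icc ((n:ℤ)+1-a)
        (min ((n:ℤ)-b) ((n:ℤ)+1-a+((n/3 : ℕ) : ℤ))) ∪
      ({1} : Finset ℤ) ×ˢ Finset.Icc (max ((n:ℤ)+1-b) ((n:ℤ)+1-a+((n/3 : ℕ) : ℤ))) n := by
    ext ⟨u, v⟩
    simp only [dinvSet, Finset.mem_filter, Finset.mem_union, Finset.mem_product,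
      Finset.mem_singleton, Finset.mem_Icc]
    constructor
    · rintro ⟨hmem, hc1, hc2⟩
      rcases mem_P.mp hmem with ⟨hu, hv1, hv2⟩ | ⟨hu, hv1, hv2⟩ <;> subst hu
      · by_cases hbv : (n:ℤ)+1-b ≤ v
        · rw [armOf_P_one hbv hv2, legOf_P_one hv2] at hc1 hc2
          push_cast at hc1 hc2
          omega
        · rw [armOf_P_zero1 (by omega), legOf_P_one hv2] at hc1 hc2
          push_cast at hc1 hc2
          omega
      · rw [armOf_P_zero2, legOf_P_two hv2] at hc1 hc2
        push_cast at hc1 hc2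
        omega
    · rintro ((⟨hu, hv1, hv2⟩ | ⟨hu, hv1, hv2⟩) | ⟨hu, hv1, hv2⟩) <;> subst hu
      · refine ⟨mem_P.mpr (Or.inr ⟨rfl, hv1, hv2⟩), ?_, ?_⟩ <;>
          rw [armOf_P_zero2, legOf_P_two hv2] <;> push_cast <;> omega
      · have hv2' : v ≤ (n:ℤ) := by omega
        refine ⟨mem_P.mpr (Or.inl ⟨rfl, hv1, hv2'⟩), ?_, ?_⟩ <;>
          rw [armOf_P_zero1 (by omega), legOf_P_one hv2'] <;> push_cast <;> omega
      · have hv1' : (n:ℤ)+1-a ≤ v := by omega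
        refine ⟨mem_P.mpr (Or.inl ⟨rfl, hv1', hv2⟩), ?_, ?_⟩ <;>
          rw [armOf_P_one (by omega) hv2, legOf_P_one hv2] <;> push_cast <;> omega
  have hd1 : Disjoint
      (({2} : Finset ℤ) ×ˢ Finset.Icc ((n:ℤ)+1-b) n)
      (({1} : Finset ℤ) ×ˢ Finset.Icc ((n:ℤ)+1-a)
        (min ((n:ℤ)-b) ((n:ℤ)+1-a+((n/3 : ℕ) : ℤ)))) := by
    rw [Finset.disjoint_left]
    rintro ⟨u, v⟩ h1 h2
    rw [Finset.mem_product, Finset.mem_singleton] at h1 h2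
    omega
  have hd2 : Disjoint
      (({2} : Finset ℤ) ×ˢ Finset.Icc ((n:ℤ)+1-b) n ∪
        ({1} : Finset ℤ) ×ˢ Finset.Icc ((n:ℤ)+1-a)
          (min ((n:ℤ)-b) ((n:ℤ)+1-a+((n/3 : ℕ) : ℤ))))
      (({1} : Finset ℤ) ×ˢ Finset.Icc (max ((n:ℤ)+1-b) ((n:ℤ)+1-a+((n/3 : ℕ) : ℤ))) n) := by
    rw [Finset.disjoint_left]
    rintro ⟨u, v⟩ h1 h2
    rw [Finset.mem_union] at h1
    rw [Finset.mem_product, Finset.mem_singleton, Finset.mem_Icc] at h2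
    rcases h1 with h1 | h1 <;> rw [Finset.mem_product, Finset.mem_singleton, Finset.mem_Icc] at h1
    · omega
    · omega
  rw [dinv, hset, Finset.card_union_of_disjoint hd2, Finset.card_union_of_disjoint hd1]
  simp only [Finset.card_product, Finset.card_singleton, Int.card_Icc, one_mul]
  omega

def Sset (n : ℕ) : Finset (ℕ × ℕ) :=
  (Finset.range n ×ˢ Finset.range n).filter
    (fun p => p.2 ≤ p.1 ∧ p.1 ≤ n - n/3 - 1 ∧ p.2 ≤ n/3)

lemma mem_Sset {n : ℕ} (hn : 1 < n) {p : ℕ × ℕ} :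
    p ∈ Sset n ↔ p.2 ≤ p.1 ∧ p.1 ≤ n - n/3 - 1 ∧ p.2 ≤ n/3 := by
  simp only [Sset, Finset.mem_filter, Finset.mem_product, Finset.mem_range]
  omega

def Uset (n : ℕ) : Finset (ℕ × ℕ) :=
  (Finset.range n ×ˢ Finset.range n).filter
    (fun p => p.1 + p.2 + 1 ≤ n ∧ n ≤ p.1 + p.2 + 1 + min p.1 (min p.2 (n/3)))

lemma mem_Uset {n : ℕ} (hn : 1 < n) {p : ℕ × ℕ} :
    p ∈ Uset n ↔ p.1 + p.2 + 1 ≤ n ∧ n ≤ p.1 + p.2 + 1 + min p.1 (min p.2 (n/3)) := by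
  simp only [Uset, Finset.mem_filter, Finset.mem_product, Finset.mem_range]
  omega

def dinvF (n a b : ℕ) : ℕ := b + min (a - b) (n/3 + 1) + (a - max (a - b) (n/3))

def eMap (n : ℕ) (p : ℕ × ℕ) : ℕ × ℕ := (dinvF n p.1 p.2, n - 1 - p.1 - p.2)

def gMap (n : ℕ) (p : ℕ × ℕ) : ℕ × ℕ :=
  if p.1 ≤ n/3 then (p.1, n - 1 - p.1 - p.2)
  else if (p.1 - n/3) % 2 = 0 then ((p.1 + n/3)/2, (n - 1 - p.1 - p.2) + (p.1 - n/3)/2)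
  else ((p.1 - n/3 - 1)/2 + n/3 + 1 + (n - 1 - p.1 - p.2), (p.1 - n/3 - 1)/2)

lemma dyckPaths_eq {n : ℕ} (hn : 1 < n) (h3 : ¬ (3 ∣ n)) :
    dyckPaths 3 n = (Sset n).image (fun p => P n p.1 p.2) := by
  ext A
  simp only [dyckPaths, Finset.mem_filter, Finset.mem_powerset, Finset.mem_image]
  constructor
  · rintro ⟨hsubA, hdp⟩
    obtain ⟨a, b, hba, ha, hb, hA⟩ := dyck_eq_P hn h3 hdp
    exact ⟨(a, b), (mem_Sset hn).mpr ⟨hba, ha, hb⟩, hA.symm⟩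
  · rintro ⟨p, hp, rfl⟩
    rw [mem_Sset hn] at hp
    have hd := isDyck_P hn h3 hp.1 hp.2.1 hp.2.2
    exact ⟨hd.1, hd⟩

theorem key (n : ℕ) (hn : 1 < n) (h3 : ¬ (3 ∣ n)) (q t : ℚ) :
    Cqt 3 n q t = ∑ i ∈ Finset.range (n / 3 + 1), schur2 (n - 1 - 2 * i) i q t := by
  have hk : n % 3 = 1 ∨ n % 3 = 2 := by omega
  -- step 1 : sum over Sset
  have hinj : ∀ p ∈ Sset n, ∀ p' ∈ Sset n,
      (fun p : ℕ × ℕ => P n p.1 p.2) p = (fun p : ℕ × ℕ => P n p.1 p.2) p' → p = p' := by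
    intro p hp p' hp' h
    rw [mem_Sset hn] at hp hp'
    simp only at h
    have h1 := congrArg (fun s => (Finset.filter (fun c : ℤ × ℤ => c.1 = 1) s).card) h
    have h2 := congrArg (fun s => (Finset.filter (fun c : ℤ × ℤ => c.1 = 2) s).card) h
    simp only [col1_card (show p.1 ≤ n by omega), col1_card (show p'.1 ≤ n by omega),
      col2_card (show p.2 ≤ n by omega), col2_card (show p'.2 ≤ n by omega)] at h1 h2
    exact Prod.ext h1 h2
  have step1 : Cqt 3 n q t =
      ∑ p ∈ Sset n, q ^ dinvF n p.1 p.2 * t ^ (n - 1 - p.1 - p.2) := by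
    rw [Cqt, dyckPaths_eq hn h3, Finset.sum_image hinj]
    refine Finset.sum_congr rfl (fun p hp => ?_)
    rw [mem_Sset hn] at hp
    rw [dinv_P hn h3 hp.1 hp.2.1 hp.2.2, area_P hn h3 hp.1 hp.2.1 hp.2.2, dinvF]
  -- step 2 : reindex to Uset
  have step2 : ∑ p ∈ Sset n, q ^ dinvF n p.1 p.2 * t ^ (n - 1 - p.1 - p.2) =
      ∑ p ∈ Uset n, q ^ p.1 * t ^ p.2 := by
    refine Finset.sum_nbij' (eMap n) (gMap n) ?_ ?_ ?_ ?_ ?_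
    · intro p hp
      rw [mem_Sset hn] at hp
      rw [mem_Uset hn]
      simp only [eMap, dinvF]
      omega
    · intro p hp
      rw [mem_Uset hn] at hp
      rw [mem_Sset hn]
      simp only [gMap]
      split_ifs with h1 h2 <;> omega
    · intro p hp
      obtain ⟨x, y⟩ := p
      rw [mem_Sset hn] at hp
      dsimp only [eMap, gMap, dinvF]
      split_ifs with h1 h2 <;> simp only [Prod.mk.injEq] <;> omega
    · intro p hp
      obtain ⟨x, y⟩ := p
      rw [mem_Uset hn] at hp
      simp only [eMap, gMap, dinvF]
      split_ifs with h1 h2 <;> simp only [Prod.mk.injEq] <;> omega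
    · intro p hp
      rfl
  -- step 3 : RHS over Uset
  have hmaps : ∀ p ∈ Uset n, n - 1 - p.1 - p.2 ∈ Finset.range (n/3 + 1) := by
    intro p hp
    rw [mem_Uset hn] at hp
    rw [Finset.mem_range]
    omega
  have step3 : (∑ i ∈ Finset.range (n / 3 + 1), schur2 (n - 1 - 2 * i) i q t) =
      ∑ p ∈ Uset n, q ^ p.1 * t ^ p.2 := by
    rw [← Finset.sum_fiberwise_of_maps_to hmaps (fun p => q ^ p.1 * t ^ p.2)]
    refine Finset.sum_congr rfl (fun i hi => ?_)
    rw [Finset.mem_range] at hi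
    rw [schur2]
    refine Finset.sum_nbij' (fun j => (i + j, n - 1 - 2*i - j)) (fun p => p.1 - i)
      ?_ ?_ ?_ ?_ ?_
    · intro j hj
      rw [Finset.mem_range] at hj
      simp only [Finset.mem_filter, mem_Uset hn]
      omega
    · intro p hp
      simp only [Finset.mem_filter, mem_Uset hn] at hp
      rw [Finset.mem_range]
      omega
    · intro j hj
      rw [Finset.mem_range] at hj
      dsimp only
      omega
    · intro p hp
      simp only [Finset.mem_filter, mem_Uset hn] at hp
      obtain ⟨x, y⟩ := p
      dsimp only
      simp only [Prod.mk.injEq]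
      omega
    · intro j hj
      rfl
  rw [step1, step2, step3]

end Stmt13Aux


/-- For `n > 1` not divisible by `3`,
`C_{3,n}(q,t) = Σ_{i=0}^{⌊n/3⌋} s_{(n−1−2i, i)}(q,t)`. -/
theorem stmt13 (n : ℕ) (hn : 1 < n) (h3 : ¬ (3 ∣ n)) :
    ∀ q t : ℚ,
      Cqt 3 n q t = ∑ i ∈ Finset.range (n / 3 + 1), schur2 (n - 1 - 2 * i) i q t := by
  intro q t
  exact Stmt13Aux.key n hn h3 q t

end
end

section
/- Let n > 1 be an integer not divisible by 3 and let π be a (3,n)-Dyck path. Any cell (1,v) in the first column that is above π and lies in Skips(π) satisfies either: arm(1,v) = 1 and leg(1,v) < n/3 − 1, or arm(1,v) = 0 and leg(1,v) > n/3. -/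
open scoped Classical

noncomputable section

/-- Any cell `(1,v)` of the first column above a `(3,n)`-Dyck path `π` lying in `Skips(π)`
satisfies either `arm(1,v) = 1` and `leg(1,v) < n/3 − 1`, or `arm(1,v) = 0` and
`leg(1,v) > n/3`. -/
theorem stmt15 (n : ℕ) (hn : 1 < n) (h3 : ¬ (3 ∣ n))
    (A : Finset (ℤ × ℤ)) (hA : IsDyckPath 3 n A) (v : ℤ)
    (hv : ((1 : ℤ), v) ∈ A) (hskip : ((1 : ℤ), v) ∈ skipsSet 3 n A) :
    (armOf A (1, v) = 1 ∧ (legOf A (1, v) : ℚ) < (n : ℚ) / 3 - 1) ∨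
    (armOf A (1, v) = 0 ∧ (n : ℚ) / 3 < (legOf A (1, v) : ℚ)) := by
  obtain ⟨hsub, hdiag, -⟩ := hA
  have hvc := hsub hv
  rw [cells, Finset.mem_product, Finset.mem_Icc, Finset.mem_Icc] at hvc
  obtain ⟨-, hv1, hvn⟩ : (1 ≤ (1:ℤ) ∧ (1:ℤ) ≤ 3) ∧ 1 ≤ v ∧ v ≤ (n:ℤ) := by
    exact ⟨hvc.1, hvc.2⟩
  have h3' : n % 3 ≠ 0 := fun h => h3 (Nat.dvd_of_mod_eq_zero h)
  -- arm ≤ 1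
  have harm : armOf A ((1:ℤ), v) ≤ 1 := by
    rw [armOf]
    refine le_trans (Finset.card_le_card ?_) (Finset.card_singleton ((2:ℤ), v)).le
    intro d hd
    rw [Finset.mem_filter] at hd
    obtain ⟨hdA, hdv, hdu⟩ := hd
    have hdc := hsub hdA
    rw [cells, Finset.mem_product, Finset.mem_Icc, Finset.mem_Icc] at hdc
    have hd3 := hdiag d hdA
    push_cast at hd3
    have h1 : d.1 = 2 := by
      rcases eq_or_lt_of_le hdc.1.2 with h | h
      · exfalso; rw [hdv, h] at hd3; omega
      · omega
    have : d = (2, v) := Prod.ext h1 hdv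
    simp [this]
  -- leg bound
  have hleg : 3 * legOf A ((1:ℤ), v) + 4 ≤ 2 * n := by
    have hsubL : A.filter (fun d => d.1 = 1 ∧ d.2 < v)
        ⊆ Finset.image (fun y => ((1:ℤ), y)) (Finset.Icc (((n/3 : ℕ) : ℤ) + 2) ((n:ℤ) - 1)) := by
      intro d hd
      rw [Finset.mem_filter] at hd
      obtain ⟨hdA, hd1, hd2⟩ := hd
      have hdc := hsub hdA
      rw [cells, Finset.mem_product, Finset.mem_Icc, Finset.mem_Icc] at hdc
      have hd3 := hdiag d hdA
      rw [hd1] at hd3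
      push_cast at hd3
      rw [Finset.mem_image]
      exact ⟨d.2, Finset.mem_Icc.mpr ⟨by omega, by omega⟩, by rw [← hd1]⟩
    have hcard : legOf A ((1:ℤ), v) ≤ ((((n:ℤ) - 1) + 1) - (((n/3 : ℕ) : ℤ) + 2)).toNat := by
      calc legOf A ((1:ℤ), v) ≤ _ := Finset.card_le_card hsubL
        _ ≤ (Finset.Icc (((n/3 : ℕ) : ℤ) + 2) ((n:ℤ) - 1)).card := Finset.card_image_le
        _ = _ := Int.card_Icc _ _
    omega
  -- skip condition
  rw [skipsSet, Finset.mem_filter] at hskip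
  have hsk : ¬ ((armOf A ((1:ℤ), v) : ℤ) * n < 3 * ((legOf A ((1:ℤ), v) : ℤ) + 1) ∧
      (3:ℤ) * (legOf A ((1:ℤ), v)) < n * ((armOf A ((1:ℤ), v) : ℤ) + 1)) := by
    intro hC
    refine hskip.2 ?_
    rw [dinvSet, Finset.mem_filter]
    exact ⟨hv, by push_cast; exact hC⟩
  interval_cases h : armOf A ((1:ℤ), v)
  · right
    refine ⟨rfl, ?_⟩
    have hint : (n : ℤ) < 3 * legOf A ((1:ℤ), v) := by
      push_neg at hsk
      have := hsk (by push_cast; omega)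
      omega
    rw [div_lt_iff₀ (by norm_num : (0:ℚ) < 3)]
    have h2 : ((n:ℤ):ℚ) < ((3 * legOf A ((1:ℤ), v) : ℤ) : ℚ) := by exact_mod_cast hint
    push_cast at h2 ⊢
    linarith
  · left
    refine ⟨rfl, ?_⟩
    have hint : 3 * ((legOf A ((1:ℤ), v) : ℤ) + 1) < n := by
      push_neg at hsk
      push_cast at hsk
      rcases lt_or_ge ((1:ℤ) * n) (3 * ((legOf A ((1:ℤ), v) : ℤ) + 1)) with hh | hh
      · have := hsk hh
        omega
      · omega
    rw [lt_sub_iff_add_lt, lt_div_iff₀ (by norm_num : (0:ℚ) < 3)]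
    have h2 : ((3 * ((legOf A ((1:ℤ), v) : ℤ) + 1) : ℤ):ℚ) < ((n:ℤ):ℚ) := by exact_mod_cast hint
    push_cast at h2 ⊢
    linarith

end
end

section
/- Let n > 1 be an integer not divisible by 3. The map π ↦ (area(π), dinv(π), skips(π)) is a bijection from the set of (3,n)-Dyck paths to the set of Dyck triples, i.e., triples (a,d,s) of non-negative integers with s ≤ min(a,d) and a + d + s + 1 = n. -/
open scoped Classical

noncomputable section

/-! ### Auxiliary development -/

/-- The canonical Dyck path with `a1` cells in column 1 and `a2` in column 2. -/
def pathOf (n a1 a2 : ℕ) : Finset (ℤ × ℤ) :=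
  ({1} : Finset ℤ) ×ˢ Finset.Icc ((n:ℤ) - a1 + 1) n ∪
  ({2} : Finset ℤ) ×ˢ Finset.Icc ((n:ℤ) - a2 + 1) n

lemma mem_pathOf {n a1 a2 : ℕ} {c : ℤ × ℤ} :
    c ∈ pathOf n a1 a2 ↔
      (c.1 = 1 ∧ (n:ℤ) - a1 + 1 ≤ c.2 ∧ c.2 ≤ n) ∨
      (c.1 = 2 ∧ (n:ℤ) - a2 + 1 ≤ c.2 ∧ c.2 ≤ n) := by
  obtain ⟨u, v⟩ := c
  simp only [pathOf, Finset.mem_union, Finset.mem_product, Finset.mem_Icc,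
    Finset.mem_singleton, and_assoc]

lemma card_filter_sprod (k : ℤ) (s : Finset ℤ) (P : ℤ×ℤ → Prop) [DecidablePred P] :
    ((({k}:Finset ℤ) ×ˢ s).filter P).card = (s.filter fun v => P (k, v)).card := by
  rw [Finset.singleton_product, Finset.filter_map, Finset.card_map]; rfl

lemma card_filter_pathOf (n a1 a2 : ℕ) (P : ℤ×ℤ → Prop) [DecidablePred P] :
    ((pathOf n a1 a2).filter P).card =
      ((Finset.Icc ((n:ℤ) - a1 + 1) n).filter fun v => P (1, v)).card +
      ((Finset.Icc ((n:ℤ) - a2 + 1) n).filter fun v => P (2, v)).card := by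
  unfold pathOf
  rw [Finset.filter_union, Finset.card_union_of_disjoint, card_filter_sprod,
    card_filter_sprod]
  refine Finset.disjoint_filter_filter ?_
  refine Finset.disjoint_left.2 fun c hc hc' => ?_
  simp only [Finset.mem_product, Finset.mem_singleton] at hc hc'
  omega

lemma card_pathOf {n a1 a2 : ℕ} (h1 : a1 ≤ n) (h2 : a2 ≤ n) :
    (pathOf n a1 a2).card = a1 + a2 := by
  have h := card_filter_pathOf n a1 a2 (fun _ => True)
  rw [Finset.filter_true_of_mem fun _ _ => trivial,
    Finset.filter_true_of_mem fun _ _ => trivial,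
    Finset.filter_true_of_mem fun _ _ => trivial, Int.card_Icc, Int.card_Icc] at h
  rw [h]
  omega

lemma isDyckPath_pathOf {n a1 a2 : ℕ} (h21 : a2 ≤ a1) (h1 : 3 * a1 < 2 * n)
    (h2 : 3 * a2 < n) : IsDyckPath 3 n (pathOf n a1 a2) := by
  refine ⟨fun c hc => ?_, fun c hc => ?_, fun c hc x y hx hxc hcy hyn => ?_⟩
  · rw [mem_pathOf] at hc
    simp only [cells, Finset.mem_product, Finset.mem_Icc]
    push_cast
    omega
  · rw [mem_pathOf] at hc
    obtain ⟨u, v⟩ := c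
    push_cast
    rcases hc with ⟨rfl, h⟩ | ⟨rfl, h⟩ <;> push_cast <;> omega
  · rw [mem_pathOf] at hc ⊢
    obtain ⟨u, v⟩ := c
    rcases hc with ⟨rfl, h⟩ | ⟨rfl, h⟩ <;> omega

/-- leg of a cell in column 1. -/
lemma legOf_one {n a1 a2 : ℕ} (v : ℤ) (hv : v ≤ n) :
    legOf (pathOf n a1 a2) (1, v) = (v - n + a1 - 1).toNat := by
  unfold legOf
  rw [card_filter_pathOf]
  have h2 : ((Finset.Icc ((n:ℤ) - a2 + 1) n).filter
      fun w => (2, w).1 = ((1:ℤ), v).1 ∧ (2, w).2 < ((1:ℤ), v).2) = ∅ := by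
    refine Finset.filter_eq_empty_iff.2 fun w _ => by simp
  have h1 : ((Finset.Icc ((n:ℤ) - a1 + 1) n).filter
      fun w => ((1:ℤ), w).1 = ((1:ℤ), v).1 ∧ ((1:ℤ), w).2 < ((1:ℤ), v).2) =
      Finset.Icc ((n:ℤ) - a1 + 1) (v - 1) := by
    ext w
    simp only [Finset.mem_filter, Finset.mem_Icc, true_and]
    constructor
    · rintro ⟨h, h'⟩; omega
    · intro h; exact ⟨⟨h.1, by omega⟩, by omega⟩
  rw [h1, h2, Int.card_Icc]
  simp only [Finset.card_empty]
  omega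

lemma legOf_two {n a1 a2 : ℕ} (v : ℤ) (hv : v ≤ n) :
    legOf (pathOf n a1 a2) (2, v) = (v - n + a2 - 1).toNat := by
  unfold legOf
  rw [card_filter_pathOf]
  have h1 : ((Finset.Icc ((n:ℤ) - a1 + 1) n).filter
      fun w => ((1:ℤ), w).1 = ((2:ℤ), v).1 ∧ ((1:ℤ), w).2 < ((2:ℤ), v).2) = ∅ := by
    refine Finset.filter_eq_empty_iff.2 fun w _ => by simp
  have h2 : ((Finset.Icc ((n:ℤ) - a2 + 1) n).filter
      fun w => ((2:ℤ), w).1 = ((2:ℤ), v).1 ∧ ((2:ℤ), w).2 < ((2:ℤ), v).2) =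
      Finset.Icc ((n:ℤ) - a2 + 1) (v - 1) := by
    ext w
    simp only [Finset.mem_filter, Finset.mem_Icc, true_and]
    constructor
    · rintro ⟨h, h'⟩; omega
    · intro h; exact ⟨⟨h.1, by omega⟩, by omega⟩
  rw [h1, h2, Int.card_Icc]
  simp only [Finset.card_empty]
  omega

lemma armOf_one {n a1 a2 : ℕ} (v : ℤ) :
    armOf (pathOf n a1 a2) (1, v) = if (n:ℤ) - a2 + 1 ≤ v ∧ v ≤ n then 1 else 0 := by
  unfold armOf
  rw [card_filter_pathOf]
  have h1 : ((Finset.Icc ((n:ℤ) - a1 + 1) n).filter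
      fun w => ((1:ℤ), w).2 = ((1:ℤ), v).2 ∧ ((1:ℤ), v).1 < ((1:ℤ), w).1) = ∅ := by
    refine Finset.filter_eq_empty_iff.2 fun w _ => by simp
  have h2 : ((Finset.Icc ((n:ℤ) - a2 + 1) n).filter
      fun w => ((2:ℤ), w).2 = ((1:ℤ), v).2 ∧ ((1:ℤ), v).1 < ((2:ℤ), w).1) =
      if (n:ℤ) - a2 + 1 ≤ v ∧ v ≤ n then {v} else ∅ := by
    by_cases hv : (n:ℤ) - a2 + 1 ≤ v ∧ v ≤ n
    · rw [if_pos hv]; ext w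
      simp only [Finset.mem_filter, Finset.mem_Icc, Finset.mem_singleton]
      omega
    · rw [if_neg hv]; ext w
      simp only [Finset.mem_filter, Finset.mem_Icc, Finset.notMem_empty, iff_false]
      omega
  rw [h1, h2]
  split <;> simp

lemma armOf_two {n a1 a2 : ℕ} (v : ℤ) : armOf (pathOf n a1 a2) (2, v) = 0 := by
  unfold armOf
  rw [Finset.card_eq_zero]
  refine Finset.filter_eq_empty_iff.2 fun c hc => ?_
  rw [mem_pathOf] at hc
  simp only [not_and]
  intro _
  omega

lemma dinv_pathOf {n a1 a2 q : ℕ} (h21 : a2 ≤ a1) (h1 : 3 * a1 < 2 * n)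
    (h2 : 3 * a2 < n) (hq : 3 * q < n) (hq' : n < 3 * q + 3) :
    dinv 3 n (pathOf n a1 a2) = a2 + min (a1 - a2) (q + 1) + min a2 (a1 - q) := by
  unfold dinv dinvSet
  rw [card_filter_pathOf]
  have hc2 : ((Finset.Icc ((n:ℤ) - a2 + 1) n).filter fun v =>
      (armOf (pathOf n a1 a2) (2, v) : ℤ) * n <
        (3:ℕ) * ((legOf (pathOf n a1 a2) (2, v) : ℤ) + 1) ∧
      ((3:ℕ) : ℤ) * (legOf (pathOf n a1 a2) (2, v) : ℤ) <
        n * ((armOf (pathOf n a1 a2) (2, v) : ℤ) + 1)) =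
      Finset.Icc ((n:ℤ) - a2 + 1) n := by
    refine Finset.filter_true_of_mem fun v hv => ?_
    rw [Finset.mem_Icc] at hv
    rw [armOf_two, legOf_two v hv.2]
    push_cast
    omega
  have hc1 : ((Finset.Icc ((n:ℤ) - a1 + 1) n).filter fun v =>
      (armOf (pathOf n a1 a2) (1, v) : ℤ) * n <
        (3:ℕ) * ((legOf (pathOf n a1 a2) (1, v) : ℤ) + 1) ∧
      ((3:ℕ) : ℤ) * (legOf (pathOf n a1 a2) (1, v) : ℤ) <
        n * ((armOf (pathOf n a1 a2) (1, v) : ℤ) + 1)) =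
      Finset.Icc ((n:ℤ) - a1 + 1) (min ((n:ℤ) - a2) ((n:ℤ) - a1 + 1 + q)) ∪
      Finset.Icc (max ((n:ℤ) - a2 + 1) ((n:ℤ) - a1 + 1 + q)) n := by
    ext v
    simp only [Finset.mem_filter, Finset.mem_Icc, Finset.mem_union]
    constructor
    · rintro ⟨⟨hlo, hhi⟩, hcond⟩
      rw [armOf_one, legOf_one v hhi] at hcond
      by_cases harm : (n:ℤ) - a2 + 1 ≤ v ∧ v ≤ n
      · rw [if_pos harm] at hcond
        push_cast at hcond
        omega
      · rw [if_neg harm] at hcond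
        push_cast at hcond
        omega
    · intro h
      have hhi : v ≤ (n:ℤ) := by omega
      refine ⟨⟨by omega, hhi⟩, ?_⟩
      rw [armOf_one, legOf_one v hhi]
      by_cases harm : (n:ℤ) - a2 + 1 ≤ v ∧ v ≤ n
      · rw [if_pos harm]
        push_cast
        omega
      · rw [if_neg harm]
        push_cast
        omega
  rw [hc1, hc2]
  rw [Finset.card_union_of_disjoint (by
    refine Finset.disjoint_left.2 fun w hw hw' => ?_
    rw [Finset.mem_Icc] at hw hw'
    omega)]
  rw [Int.card_Icc, Int.card_Icc, Int.card_Icc]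
  omega

lemma area_pathOf {n a1 a2 q : ℕ} (h21 : a2 ≤ a1) (h1 : 3 * a1 < 2 * n)
    (h2 : 3 * a2 < n) (hq : 3 * q < n) (hq' : n < 3 * q + 3) :
    area 3 n (pathOf n a1 a2) = n - 1 - a1 - a2 := by
  have hpos : ((cells 3 n).filter fun c => 0 < rk 3 n c.1 c.2) =
      ({1} : Finset ℤ) ×ˢ Finset.Icc ((q:ℤ) + 2) n ∪
      ({2} : Finset ℤ) ×ˢ Finset.Icc ((n:ℤ) - q + 1) n := by
    ext c
    obtain ⟨u, v⟩ := c
    simp only [Finset.mem_filter]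
    simp only [cells, rk, Finset.mem_filter, Finset.mem_product, Finset.mem_Icc,
      Finset.mem_union, Finset.mem_singleton]
    constructor
    · rintro ⟨⟨⟨hu1, hu3⟩, hv⟩, hr⟩
      have : u = 1 ∨ u = 2 ∨ u = 3 := by omega
      rcases this with rfl | rfl | rfl
      · exact Or.inl ⟨rfl, by push_cast at hr; omega, hv.2⟩
      · exact Or.inr ⟨rfl, by push_cast at hr; omega, hv.2⟩
      · exfalso; push_cast at hr; omega
    · rintro (⟨rfl, hv⟩ | ⟨rfl, hv⟩) <;>
        refine ⟨⟨⟨by omega, by omega⟩, by omega, by omega⟩, ?_⟩ <;> push_cast <;> omega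
  have hsub : pathOf n a1 a2 ⊆ (cells 3 n).filter fun c => 0 < rk 3 n c.1 c.2 := by
    intro c hc
    rw [mem_pathOf] at hc
    obtain ⟨u, v⟩ := c
    simp only [Finset.mem_filter]
    simp only [cells, rk, Finset.mem_filter, Finset.mem_product, Finset.mem_Icc]
    rcases hc with ⟨rfl, hv⟩ | ⟨rfl, hv⟩ <;>
      refine ⟨⟨⟨by omega, by omega⟩, by omega, by omega⟩, ?_⟩ <;> push_cast <;> omega
  have hset : areaSet 3 n (pathOf n a1 a2) =
      ((cells 3 n).filter fun c => 0 < rk 3 n c.1 c.2) \ pathOf n a1 a2 := by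
    ext c
    simp only [areaSet, Finset.mem_filter, Finset.mem_sdiff]
    tauto
  have hA : (pathOf n a1 a2).card = a1 + a2 := card_pathOf (by omega) (by omega)
  have hP : (((cells 3 n).filter fun c => 0 < rk 3 n c.1 c.2)).card = n - 1 := by
    rw [hpos, Finset.card_union_of_disjoint (by
      refine Finset.disjoint_left.2 fun w hw hw' => ?_
      simp only [Finset.mem_product, Finset.mem_singleton] at hw hw'
      omega)]
    simp only [Finset.card_product, Finset.card_singleton, Int.card_Icc, one_mul]
    omega
  unfold area
  rw [hset, Finset.card_sdiff_of_subset hsub, hA, hP]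
  omega

lemma dinv_add_skips (m n : ℕ) (A : Finset (ℤ × ℤ)) :
    dinv m n A + skips m n A = A.card := by
  have hsub : dinvSet m n A ⊆ A := Finset.filter_subset _ _
  have hle := Finset.card_le_card hsub
  unfold dinv skips skipsSet
  rw [← Finset.sdiff_eq_filter, Finset.card_sdiff_of_subset hsub]
  omega

lemma skips_pathOf {n a1 a2 q : ℕ} (h21 : a2 ≤ a1) (h1 : 3 * a1 < 2 * n)
    (h2 : 3 * a2 < n) (hq : 3 * q < n) (hq' : n < 3 * q + 3) :
    skips 3 n (pathOf n a1 a2) =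
      a1 + a2 - (a2 + min (a1 - a2) (q + 1) + min a2 (a1 - q)) := by
  have hs := dinv_add_skips 3 n (pathOf n a1 a2)
  rw [card_pathOf (by omega) (by omega), dinv_pathOf h21 h1 h2 hq hq'] at hs
  omega

lemma exists_params {n : ℕ} (hn : 0 < n) {A : Finset (ℤ × ℤ)}
    (hA : IsDyckPath 3 n A) :
    ∃ a1 a2 : ℕ, a2 ≤ a1 ∧ 3 * a1 < 2 * n ∧ 3 * a2 < n ∧ A = pathOf n a1 a2 := by
  obtain ⟨hsub, hdiag, hNW⟩ := hA
  have hbounds : ∀ c ∈ A, (1 ≤ c.1 ∧ c.1 ≤ 3) ∧ 1 ≤ c.2 ∧ c.2 ≤ (n:ℤ) := by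
    intro c hc
    have := hsub hc
    simpa [cells, Finset.mem_product, Finset.mem_Icc] using this
  have seg : ∀ u : ℤ, 1 ≤ u → u ≤ 2 →
      ∃ k : ℕ, (k:ℤ) ≤ n ∧ ∀ v : ℤ, ((u, v) ∈ A ↔ (n:ℤ) - k + 1 ≤ v ∧ v ≤ n) := by
    intro u hu1 hu2
    set C : Finset ℤ := (Finset.Icc (1:ℤ) n).filter (fun v => (u, v) ∈ A) with hC
    have hmemC : ∀ v : ℤ, v ∈ C ↔ ((u, v) ∈ A) := by
      intro v
      simp only [hC, Finset.mem_filter, Finset.mem_Icc]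
      constructor
      · exact fun h => h.2
      · intro h
        exact ⟨⟨(hbounds _ h).2.1, (hbounds _ h).2.2⟩, h⟩
    by_cases hne : C.Nonempty
    · set m := C.min' hne with hm
      have hmC : m ∈ C := C.min'_mem hne
      have hmA : (u, m) ∈ A := (hmemC m).1 hmC
      have hm1 : 1 ≤ m := by
        have := (hbounds _ hmA).2.1; exact this
      have hmn : m ≤ (n:ℤ) := (hbounds _ hmA).2.2
      have hCeq : C = Finset.Icc m (n:ℤ) := by
        ext v
        rw [Finset.mem_Icc]
        constructor
        · intro hv
          exact ⟨C.min'_le v hv, ((hmemC v).1 hv) |> fun h => (hbounds _ h).2.2⟩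
        · rintro ⟨h1, h2⟩
          exact (hmemC v).2 (hNW (u, m) hmA u v hu1 le_rfl h1 h2)
      refine ⟨((n:ℤ) + 1 - m).toNat, by omega, fun v => ?_⟩
      rw [← hmemC v, hCeq, Finset.mem_Icc]
      omega
    · refine ⟨0, by omega, fun v => ?_⟩
      constructor
      · intro h
        exact absurd ((hmemC v).2 h) (fun hc => hne ⟨v, hc⟩)
      · intro h
        omega
  obtain ⟨a1, ha1n, hiff1⟩ := seg 1 le_rfl one_le_two
  obtain ⟨a2, ha2n, hiff2⟩ := seg 2 one_le_two le_rfl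
  have hAeq : A = pathOf n a1 a2 := by
    ext c
    obtain ⟨u, v⟩ := c
    rw [mem_pathOf]
    constructor
    · intro hc
      have hb := hbounds _ hc
      have : u = 1 ∨ u = 2 ∨ u = 3 := by omega
      rcases this with rfl | rfl | rfl
      · exact Or.inl ⟨rfl, by rw [← hiff1]; exact hc⟩
      · exact Or.inr ⟨rfl, by rw [← hiff2]; exact hc⟩
      · exfalso
        have := hdiag _ hc
        simp only at this
        push_cast at this
        omega
    · rintro (⟨rfl, hv⟩ | ⟨rfl, hv⟩)
      · exact (hiff1 v).2 hv
      · exact (hiff2 v).2 hv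
  have h21 : a2 ≤ a1 := by
    rcases Nat.eq_zero_or_pos a2 with rfl | hpos
    · omega
    · have hvA : ((2:ℤ), (n:ℤ) - a2 + 1) ∈ A := (hiff2 _).2 (by omega)
      have h1A : ((1:ℤ), (n:ℤ) - a2 + 1) ∈ A :=
        hNW _ hvA 1 ((n:ℤ) - a2 + 1) le_rfl one_le_two le_rfl (by omega)
      have := (hiff1 _).1 h1A
      omega
  have h3a1 : 3 * a1 < 2 * n := by
    rcases Nat.eq_zero_or_pos a1 with rfl | hpos
    · omega
    · have hvA : ((1:ℤ), (n:ℤ) - a1 + 1) ∈ A := (hiff1 _).2 (by omega)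
      have := hdiag _ hvA
      simp only at this
      push_cast at this
      omega
  have h3a2 : 3 * a2 < n := by
    rcases Nat.eq_zero_or_pos a2 with rfl | hpos
    · omega
    · have hvA : ((2:ℤ), (n:ℤ) - a2 + 1) ∈ A := (hiff2 _).2 (by omega)
      have := hdiag _ hvA
      simp only at this
      push_cast at this
      omega
  exact ⟨a1, a2, h21, h3a1, h3a2, hAeq⟩

/-- The map `π ↦ (area(π), dinv(π), skips(π))` is a bijection from the set of `(3,n)`-Dyck
paths to the set of Dyck triples `(a,d,s)` with `s ≤ min(a,d)` and `a + d + s + 1 = n`. -/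
theorem stmt18 (n : ℕ) (hn : 1 < n) (h3 : ¬ (3 ∣ n)) :
    Set.BijOn (fun A => (area 3 n A, dinv 3 n A, skips 3 n A))
      {A : Finset (ℤ × ℤ) | IsDyckPath 3 n A}
      {x : ℕ × ℕ × ℕ | x.2.2 ≤ min x.1 x.2.1 ∧ x.1 + x.2.1 + x.2.2 + 1 = n} := by
  set q := n / 3 with hqdef
  have hq : 3 * q < n := by omega
  have hq' : n < 3 * q + 3 := by omega
  refine ⟨?_, ?_, ?_⟩
  · intro A hA
    simp only [Set.mem_setOf_eq] at hA ⊢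
    obtain ⟨a1, a2, h21, h1, h2, rfl⟩ := exists_params (by omega) hA
    rw [area_pathOf h21 h1 h2 hq hq', dinv_pathOf h21 h1 h2 hq hq',
      skips_pathOf h21 h1 h2 hq hq']
    constructor
    · omega
    · omega
  · intro A hA B hB heq
    simp only [Set.mem_setOf_eq] at hA hB
    obtain ⟨a1, a2, h21, h1, h2, rfl⟩ := exists_params (by omega) hA
    obtain ⟨b1, b2, g21, g1, g2, rfl⟩ := exists_params (by omega) hB
    simp only [Prod.mk.injEq] at heq
    rw [area_pathOf h21 h1 h2 hq hq', dinv_pathOf h21 h1 h2 hq hq',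
      skips_pathOf h21 h1 h2 hq hq', area_pathOf g21 g1 g2 hq hq',
      dinv_pathOf g21 g1 g2 hq hq', skips_pathOf g21 g1 g2 hq hq'] at heq
    have : a1 = b1 ∧ a2 = b2 := by omega
    rw [this.1, this.2]
  · intro x hx
    simp only [Set.mem_setOf_eq] at hx
    obtain ⟨a, d, s⟩ := x
    simp only at hx
    have key : ∃ a1 a2 : ℕ, a2 ≤ a1 ∧ 3 * a1 < 2 * n ∧ 3 * a2 < n ∧
        n - 1 - a1 - a2 = a ∧ a2 + min (a1 - a2) (q + 1) + min a2 (a1 - q) = d ∧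
        a1 + a2 - (a2 + min (a1 - a2) (q + 1) + min a2 (a1 - q)) = s := by
      refine ⟨(if d ≤ q then d else if (d - q) % 2 = 0 then (d + q) / 2
          else s + (d + q + 1) / 2),
        (if d ≤ q then s else if (d - q) % 2 = 0 then s + (d - q) / 2
          else (d - q - 1) / 2), ?_, ?_, ?_, ?_, ?_, ?_⟩ <;> split_ifs <;> omega
    obtain ⟨a1, a2, h21, h1, h2, hfa, hfd, hfs⟩ := key
    refine ⟨pathOf n a1 a2, isDyckPath_pathOf h21 h1 h2, ?_⟩
    simp only
    rw [area_pathOf h21 h1 h2 hq hq', dinv_pathOf h21 h1 h2 hq hq',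
      skips_pathOf h21 h1 h2 hq hq', hfa, hfd]
    simp only [Prod.mk.injEq]
    exact ⟨trivial, trivial, by omega⟩


end
end
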